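/- arXiv:1611.02486 — 6 statements merged into one kernel-verified Lean document; each statement's English description precedes it below -/
import Mathlib

section
/- Let G be a finite group with Sylow p-subgroup P, nontrivial cyclic hyperfocal subgroup P̃ = P ∩ O^p(G), and assume P̃ ⊴ P with |P̃| = p^n. Let T be a p-complement of N_G(P) and X a subgroup of T properly containing O_{p'}(C_G(P)). If X/O_{p'}(C_G(P)) acts fixed-point-freely on P̃ \ {1} and [P, X] ≤ P̃, then P = P̃ ⋊ C_P(X). -/
open commutatorElement in
/-- Lemma 3: with `P̃ = P ⊓ O^p(G)` nontrivial cyclic of order `p^n`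
and normal in `P`, `T` a `p`-complement of `N_G(P)`, `K = O_{p'}(C_G(P))`, and
`X` a subgroup of `T` properly containing `K` such that elements of `X \ K` fix
no nontrivial element of `P̃` and `[P, X] ≤ P̃`, we have `P = P̃ ⋊ C_P(X)`. -/
theorem sylow_eq_hyperfocal_semidirect {G : Type*} [Group G] [Finite G] (p n : ℕ)
    [Fact p.Prime] (P : Sylow p G)
    (Op Pt : Subgroup G)
    (hOp : Op = Subgroup.closure {g : G | ¬ p ∣ orderOf g})
    (hPt : Pt = (P : Subgroup G) ⊓ Op)
    (hcyc : IsCyclic ↥Pt) (hne : Pt ≠ ⊥) (hcard : Nat.card ↥Pt = p ^ n)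
    (hPtnorm : (Pt.subgroupOf (P : Subgroup G)).Normal)
    (T : Subgroup G) (hTN : T ≤ Subgroup.normalizer ((P : Subgroup G) : Set G))
    (hTcop : Nat.Coprime (Nat.card T) p)
    (hTsup : (P : Subgroup G) ⊔ T = Subgroup.normalizer ((P : Subgroup G) : Set G))
    (K : Subgroup G)
    (hKle : K ≤ Subgroup.centralizer ((P : Subgroup G) : Set G))
    (hKcop : Nat.Coprime (Nat.card K) p)
    (hKnorm : (K.subgroupOf (Subgroup.centralizer ((P : Subgroup G) : Set G))).Normal)
    (hKmax : ∀ L ≤ Subgroup.centralizer ((P : Subgroup G) : Set G),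
      Nat.Coprime (Nat.card L) p →
      (L.subgroupOf (Subgroup.centralizer ((P : Subgroup G) : Set G))).Normal → L ≤ K)
    (X : Subgroup G) (hXT : X ≤ T) (hKX : K < X)
    (hfpf : ∀ x ∈ X, x ∉ K → ∀ s ∈ Pt, s ≠ 1 → x * s * x⁻¹ ≠ s)
    (hcomm : ⁅(P : Subgroup G), X⁆ ≤ Pt) :
    Pt ⊓ (Subgroup.centralizer (X : Set G) ⊓ (P : Subgroup G)) = ⊥ ∧
      Pt ⊔ (Subgroup.centralizer (X : Set G) ⊓ (P : Subgroup G)) = (P : Subgroup G) := by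
  classical
  -- pick an element of X \ K
  obtain ⟨x₀, hx₀X, hx₀K⟩ := SetLike.exists_of_lt hKX
  -- Op is normal (closure of a conjugation-invariant set)
  have hOpN : ∀ g h : G, h ∈ Op → g * h * g⁻¹ ∈ Op := by
    intro g h hh
    rw [hOp] at hh ⊢
    induction hh using Subgroup.closure_induction with
    | mem x hx =>
        refine Subgroup.subset_closure ?_
        have : orderOf (g * x * g⁻¹) = orderOf x := by
          have hsc : SemiconjBy g x (g * x * g⁻¹) := by
            unfold SemiconjBy; group
          exact (hsc.orderOf_eq g).symm
        simpa [Set.mem_setOf_eq, this] using hx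
    | one => simpa using Subgroup.one_mem _
    | mul x y hx hy ihx ihy =>
        have : g * (x * y) * g⁻¹ = (g * x * g⁻¹) * (g * y * g⁻¹) := by group
        rw [this]; exact mul_mem ihx ihy
    | inv x hx ihx =>
        have : g * x⁻¹ * g⁻¹ = (g * x * g⁻¹)⁻¹ := by group
        rw [this]; exact inv_mem ihx
  -- X normalizes P
  have hXnormP : ∀ x ∈ X, ∀ u : G, u ∈ (P : Subgroup G) → x * u * x⁻¹ ∈ (P : Subgroup G) := by
    intro x hx u hu
    have hxn : x ∈ Subgroup.normalizer ((P : Subgroup G) : Set G) := hTN (hXT hx)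
    exact (Subgroup.mem_normalizer_iff.mp hxn u).mp hu
  -- X normalizes Pt
  have hXnorm : ∀ x ∈ X, ∀ s ∈ Pt, x * s * x⁻¹ ∈ Pt := by
    intro x hx s hs
    rw [hPt] at hs ⊢
    exact ⟨hXnormP x hx s hs.1, hOpN x s hs.2⟩
  -- K centralizes P
  have hKcent : ∀ k ∈ K, ∀ u ∈ (P : Subgroup G), k * u * k⁻¹ = u := by
    intro k hk u hu
    have := (Subgroup.mem_centralizer_iff.mp (hKle hk)) u hu
    rw [← this]; group
  -- Pt ≤ P
  have hPtP : Pt ≤ (P : Subgroup G) := by rw [hPt]; exact inf_le_left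
  -- uniqueness of fixed points: an x₀-fixed element of Pt is trivial
  have hufix : ∀ t ∈ Pt, x₀ * t * x₀⁻¹ = t → t = 1 := by
    intro t ht hfix
    by_contra htne
    exact hfpf x₀ hx₀X hx₀K t ht htne hfix
  -- a generator of Pt
  obtain ⟨g, hg⟩ := hcyc
  have hgPt : (g : G) ∈ Pt := g.2
  have hgne : (g : G) ≠ 1 := by
    intro h1
    apply hne
    rw [Subgroup.eq_bot_iff_forall]
    intro x hx
    obtain ⟨k, hk⟩ := hg ⟨x, hx⟩
    have hx' : ((g ^ k : ↥Pt) : G) = x := congrArg Subtype.val hk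
    rw [← hx']; push_cast [h1]; simp
  -- conjugation action on the generator, as a power
  have hpow : ∀ x ∈ X, ∃ a : ℤ, x * (g : G) * x⁻¹ = (g : G) ^ a := by
    intro x hx
    have hmem : x * (g : G) * x⁻¹ ∈ Pt := hXnorm x hx _ hgPt
    obtain ⟨a, ha⟩ := hg ⟨_, hmem⟩
    refine ⟨a, ?_⟩
    have ha' : ((g ^ a : ↥Pt) : G) = x * (g : G) * x⁻¹ := congrArg Subtype.val ha
    push_cast at ha'
    exact ha'.symm
  -- conjugation of powers of g
  have key : ∀ z : G, ∀ k m : ℤ, z * (g : G) * z⁻¹ = (g : G) ^ k →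
      z * (g : G) ^ m * z⁻¹ = (g : G) ^ (k * m) := by
    intro z k m h
    have h1 : (z * (g : G) * z⁻¹) ^ m = z * (g : G) ^ m * z⁻¹ := conj_zpow
    rw [← h1, h, ← zpow_mul]
  -- commutators of X centralize g, hence lie in K
  have hcommK : ∀ y ∈ X, x₀⁻¹ * y⁻¹ * x₀ * y ∈ K := by
    intro y hy
    set c : G := x₀⁻¹ * y⁻¹ * x₀ * y with hc
    have hcX : c ∈ X := mul_mem (mul_mem (mul_mem (inv_mem hx₀X) (inv_mem hy)) hx₀X) hy
    obtain ⟨a, ha⟩ := hpow x₀ hx₀X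
    obtain ⟨b, hb⟩ := hpow y hy
    obtain ⟨d, hd⟩ := hpow x₀⁻¹ (inv_mem hx₀X)
    obtain ⟨e, he⟩ := hpow y⁻¹ (inv_mem hy)
    have had : (g : G) ^ (d * a) = (g : G) := by
      have h1 := key x₀⁻¹ d a hd
      rw [← ha] at h1
      rw [← h1]; group
    have hbe : (g : G) ^ (e * b) = (g : G) := by
      have h1 := key y⁻¹ e b he
      rw [← hb] at h1
      rw [← h1]; group
    -- c centralizes g
    have hcg : c * (g : G) * c⁻¹ = (g : G) := by
      have h1 := key x₀ a b ha
      have h2 := key y⁻¹ e (a * b) he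
      have h3 := key x₀⁻¹ d (e * (a * b)) hd
      have hc' : c * (g : G) * c⁻¹
          = x₀⁻¹ * (y⁻¹ * (x₀ * (y * (g:G) * y⁻¹) * x₀⁻¹) * y⁻¹⁻¹) * x₀⁻¹⁻¹ := by
        rw [hc]; group
      rw [hc', hb, h1, h2, h3]
      have hexp : d * (e * (a * b)) = (d * a) * (e * b) := by ring
      rw [hexp, zpow_mul, had, hbe]
    by_contra hcK
    exact hfpf c hcX hcK (g : G) hgPt hgne hcg
  -- Part 1: trivial intersection
  have part1 : Pt ⊓ (Subgroup.centralizer (X : Set G) ⊓ (P : Subgroup G)) = ⊥ := by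
    rw [Subgroup.eq_bot_iff_forall]
    rintro t ⟨htPt, htC, _⟩
    by_contra htne
    have hcomm' := (Subgroup.mem_centralizer_iff.mp htC) x₀ hx₀X
    have : x₀ * t * x₀⁻¹ = t := by rw [hcomm']; group
    exact hfpf x₀ hx₀X hx₀K t htPt htne this
  refine ⟨part1, ?_⟩
  -- Part 2: the join is all of P
  refine le_antisymm (sup_le hPtP inf_le_right) ?_
  intro u hu
  -- the twisted map s ↦ s⁻¹ * x₀ s x₀⁻¹ on Pt is bijective
  have hFinj : Function.Injective
      (fun s : ↥Pt => (⟨(s : G)⁻¹ * (x₀ * (s : G) * x₀⁻¹),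
        mul_mem (inv_mem s.2) (hXnorm x₀ hx₀X _ s.2)⟩ : ↥Pt)) := by
    intro s t hst
    have hst' : (s : G)⁻¹ * (x₀ * (s : G) * x₀⁻¹)
        = (t : G)⁻¹ * (x₀ * (t : G) * x₀⁻¹) := congrArg Subtype.val hst
    have hfix : x₀ * ((t : G) * (s : G)⁻¹) * x₀⁻¹ = (t : G) * (s : G)⁻¹ := by
      have h1 : (t:G) * ((s:G)⁻¹ * (x₀ * (s:G) * x₀⁻¹))
          = (t:G) * ((t:G)⁻¹ * (x₀ * (t:G) * x₀⁻¹)) := by rw [hst']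
      have h2 : (t:G) * (s:G)⁻¹ * (x₀ * (s:G) * x₀⁻¹) = x₀ * (t:G) * x₀⁻¹ := by
        calc (t:G) * (s:G)⁻¹ * (x₀ * (s:G) * x₀⁻¹)
            = (t:G) * ((s:G)⁻¹ * (x₀ * (s:G) * x₀⁻¹)) := by group
          _ = (t:G) * ((t:G)⁻¹ * (x₀ * (t:G) * x₀⁻¹)) := h1
          _ = x₀ * (t:G) * x₀⁻¹ := by group
      calc x₀ * ((t : G) * (s : G)⁻¹) * x₀⁻¹
          = (x₀ * (t:G) * x₀⁻¹) * (x₀ * (s:G) * x₀⁻¹)⁻¹ := by group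
        _ = ((t:G) * (s:G)⁻¹ * (x₀ * (s:G) * x₀⁻¹)) * (x₀ * (s:G) * x₀⁻¹)⁻¹ := by rw [h2]
        _ = (t : G) * (s : G)⁻¹ := by group
    have hmem : (t : G) * (s : G)⁻¹ ∈ Pt := mul_mem t.2 (inv_mem s.2)
    have := hufix _ hmem hfix
    have hts : (t : G) = (s : G) := by
      have := mul_inv_eq_one.mp this
      exact this
    exact (Subtype.ext hts).symm
  have hFsurj := Finite.injective_iff_surjective.mp hFinj
  -- the commutator c = x₀ u x₀⁻¹ u⁻¹ lies in Pt
  have hcPt : x₀ * u * x₀⁻¹ * u⁻¹ ∈ Pt := by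
    have h1 : ⁅u, x₀⁆ ∈ ⁅(P : Subgroup G), X⁆ :=
      Subgroup.commutator_mem_commutator hu hx₀X
    have h2 : ⁅x₀, u⁆ = ⁅u, x₀⁆⁻¹ := (commutatorElement_inv u x₀).symm
    have : ⁅x₀, u⁆ ∈ Pt := by rw [h2]; exact inv_mem (hcomm h1)
    simpa [commutatorElement_def] using this
  -- solve for s with s⁻¹ x₀ s x₀⁻¹ = c⁻¹
  obtain ⟨s, hs⟩ := hFsurj ⟨(x₀ * u * x₀⁻¹ * u⁻¹)⁻¹, inv_mem hcPt⟩
  have hs' : (s : G)⁻¹ * (x₀ * (s : G) * x₀⁻¹) = (x₀ * u * x₀⁻¹ * u⁻¹)⁻¹ :=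
    congrArg Subtype.val hs
  set w : G := (s : G) * u with hw
  -- w is fixed by x₀
  have hwfix : x₀ * w * x₀⁻¹ = w := by
    have h1 : x₀ * (s : G) * x₀⁻¹ = (s : G) * (x₀ * u * x₀⁻¹ * u⁻¹)⁻¹ := by
      rw [← hs']; group
    calc x₀ * w * x₀⁻¹ = (x₀ * (s:G) * x₀⁻¹) * (x₀ * u * x₀⁻¹) := by rw [hw]; group
      _ = (s : G) * (x₀ * u * x₀⁻¹ * u⁻¹)⁻¹ * (x₀ * u * x₀⁻¹) := by rw [h1]
      _ = (s : G) * u := by group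
      _ = w := hw.symm
  -- w ∈ P
  have hwP : w ∈ (P : Subgroup G) := mul_mem (hPtP s.2) hu
  -- w is fixed by every y ∈ X
  have hwcent : ∀ y ∈ X, y * w = w * y := by
    intro y hy
    -- first: x₀ fixes y w y⁻¹
    have hstep : x₀ * (y * w * y⁻¹) * x₀⁻¹ = y * w * y⁻¹ := by
      set c : G := x₀⁻¹ * y⁻¹ * x₀ * y with hcdef
      have hcK : c ∈ K := hcommK y hy
      have hzw : (x₀ * c) * w * (x₀ * c)⁻¹ = w := by
        have h1 : (x₀ * c) * w * (x₀ * c)⁻¹ = x₀ * (c * w * c⁻¹) * x₀⁻¹ := by group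
        rw [h1, hKcent c hcK w hwP, hwfix]
      have hz : x₀ * c = y⁻¹ * x₀ * y := by rw [hcdef]; group
      rw [hz] at hzw
      calc x₀ * (y * w * y⁻¹) * x₀⁻¹
          = y * ((y⁻¹ * x₀ * y) * w * (y⁻¹ * x₀ * y)⁻¹) * y⁻¹ := by group
        _ = y * w * y⁻¹ := by rw [hzw]
    -- the difference t = (y w y⁻¹) w⁻¹ is in Pt and fixed by x₀
    have htPt : y * w * y⁻¹ * w⁻¹ ∈ Pt := by
      have h1 : ⁅w, y⁆ ∈ ⁅(P : Subgroup G), X⁆ :=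
        Subgroup.commutator_mem_commutator hwP hy
      have h2 : ⁅y, w⁆ = ⁅w, y⁆⁻¹ := (commutatorElement_inv w y).symm
      have : ⁅y, w⁆ ∈ Pt := by rw [h2]; exact inv_mem (hcomm h1)
      simpa [commutatorElement_def] using this
    have htfix : x₀ * (y * w * y⁻¹ * w⁻¹) * x₀⁻¹ = y * w * y⁻¹ * w⁻¹ := by
      calc x₀ * (y * w * y⁻¹ * w⁻¹) * x₀⁻¹
          = (x₀ * (y * w * y⁻¹) * x₀⁻¹) * (x₀ * w * x₀⁻¹)⁻¹ := by group
        _ = (y * w * y⁻¹) * w⁻¹ := by rw [hstep, hwfix]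
    have := hufix _ htPt htfix
    have h1 : y * w * y⁻¹ = w := by
      have := mul_inv_eq_one.mp this
      exact this
    calc y * w = (y * w * y⁻¹) * y := by group
      _ = w * y := by rw [h1]
  -- conclude: u = s⁻¹ * w ∈ Pt ⊔ (C ⊓ P)
  have hwC : w ∈ Subgroup.centralizer (X : Set G) ⊓ (P : Subgroup G) := by
    refine ⟨Subgroup.mem_centralizer_iff.mpr ?_, hwP⟩
    intro y hy
    exact hwcent y hy
  have hu' : u = (s : G)⁻¹ * w := by rw [hw]; group
  rw [hu']
  exact Subgroup.mul_mem_sup (inv_mem s.2) hwC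
end

section
/- Let X be a group of automorphisms of a set S of p-power order acting on a finite p-group P that acts transitively on S, with gcd(|X|, |P|) not required but X a p'-group, such that the actions are compatible (i.e., the semidirect product acts on S). Then there exists an element of S fixed by X. (Glauberman's lemma special case: a p'-group X acting on a transitive P-set S, compatible actions, P a p-group, has a fixed point on S.) -/
universe u v w

private lemma glauberman_abelian {p : ℕ} [Fact p.Prime]
    {P X S : Type*} [Group P] [Group X] [Finite P] [Finite X]
    [MulAction P S] [MulAction X S] [MulDistribMulAction X P]
    (hP : IsPGroup p P) (hX : ¬ p ∣ Nat.card X)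
    (hcompat : ∀ (x : X) (g : P) (s : S), x • (g • s) = (x • g) • (x • s))
    (s0 : S) (horb : ∀ x : X, ∃ z ∈ Subgroup.center P, z • s0 = x • s0) :
    ∃ s : S, ∀ x : X, x • s = s := by
  classical
  cases nonempty_fintype X
  set Z := Subgroup.center P with hZdef
  letI : CommGroup Z := { (inferInstance : Group Z) with
    mul_comm := fun a b => Subtype.ext (Subgroup.mem_center_iff.mp b.2 (a : P)) }
  choose f hfZ hf using horb
  by_cases hK1 : Nat.card Z = 1
  · refine ⟨s0, fun x => ?_⟩
    have hbot : Z = ⊥ := Subgroup.eq_bot_of_card_eq _ hK1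
    have : f x = 1 := by
      have := hfZ x
      rw [hbot, Subgroup.mem_bot] at this
      exact this
    rw [← hf x, this, one_smul]
  · have hKpos : 0 < Nat.card Z := Nat.card_pos
    have hK : 1 < Nat.card Z := lt_of_le_of_ne hKpos (Ne.symm hK1)
    set K := Nat.card Z with hKdef
    set n := Nat.card X with hndef
    -- action of X on Z
    have hsmulZ : ∀ (x : X) (z : P), z ∈ Z → x • z ∈ Z := by
      intro x z hz
      rw [hZdef, Subgroup.mem_center_iff]
      intro g
      have hg : g = x • (x⁻¹ • g) := (smul_inv_smul x g).symm
      rw [hZdef, Subgroup.mem_center_iff] at hz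
      rw [hg, ← smul_mul', ← smul_mul', hz]
    let φ : X → Z →* Z := fun x =>
      { toFun := fun z => ⟨x • (z : P), hsmulZ x z z.2⟩
        map_one' := Subtype.ext (smul_one x)
        map_mul' := fun a b => Subtype.ext (smul_mul' x (a : P) (b : P)) }
    let F : X → Z := fun x => ⟨f x, hfZ x⟩
    -- multiplicativity of the relation
    have hRmul : ∀ a a' b b' : Z, (a : P) • s0 = (a' : P) • s0 →
        (b : P) • s0 = (b' : P) • s0 →
        ((a * b : Z) : P) • s0 = ((a' * b' : Z) : P) • s0 := by
      intro a a' b b' ha hb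
      have hc : (b' : P) * (a : P) = (a : P) * (b' : P) :=
        Subgroup.mem_center_iff.mp a.2 (b' : P)
      calc ((a * b : Z) : P) • s0 = (a : P) • ((b : P) • s0) := by
            rw [Subgroup.coe_mul, mul_smul]
        _ = (a : P) • ((b' : P) • s0) := by rw [hb]
        _ = (b' : P) • ((a : P) • s0) := by rw [← mul_smul, ← hc, mul_smul]
        _ = (b' : P) • ((a' : P) • s0) := by rw [ha]
        _ = ((b' * a' : Z) : P) • s0 := by rw [Subgroup.coe_mul, mul_smul]
        _ = ((a' * b' : Z) : P) • s0 := by rw [mul_comm]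
    have hRprod : ∀ (u v : X → Z), (∀ x, (u x : P) • s0 = (v x : P) • s0) →
        ∀ t : Finset X, ((∏ x ∈ t, u x : Z) : P) • s0 = ((∏ x ∈ t, v x : Z) : P) • s0 := by
      intro u v h t
      induction t using Finset.induction_on with
      | empty => simp
      | insert a t hx ih =>
        rw [Finset.prod_insert hx, Finset.prod_insert hx]
        exact hRmul _ _ _ _ (h _) ih
    have hRpow : ∀ (a b : Z), (a : P) • s0 = (b : P) • s0 →
        ∀ k : ℕ, ((a ^ k : Z) : P) • s0 = ((b ^ k : Z) : P) • s0 := by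
      intro a b h k
      induction k with
      | zero => simp
      | succ k ih => rw [pow_succ, pow_succ]; exact hRmul _ _ _ _ ih h
    -- cocycle identity
    have hcoc : ∀ x y : X, ((F (y * x) : Z) : P) • s0 = ((φ y (F x) * F y : Z) : P) • s0 := by
      intro x y
      have : (F (y * x) : P) • s0 = (y * x) • s0 := hf (y * x)
      rw [this, mul_smul, ← hf x, hcompat, ← hf y, Subgroup.coe_mul, mul_smul]
      rfl
    set b : Z := ∏ x : X, F x with hbdef
    have hb : ∀ y : X, (b : P) • s0 = ((φ y b * (F y) ^ n : Z) : P) • s0 := by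
      intro y
      have h1 : b = ∏ x : X, F (y * x) :=
        (Fintype.prod_equiv (Equiv.mulLeft y) _ _ (fun x => rfl)).symm
      have h2 : ((∏ x : X, F (y * x) : Z) : P) • s0
          = ((∏ x : X, (φ y (F x) * F y) : Z) : P) • s0 :=
        hRprod _ _ (fun x => hcoc x y) Finset.univ
      have h3 : (∏ x : X, (φ y (F x) * F y) : Z) = φ y b * (F y) ^ n := by
        rw [Finset.prod_mul_distrib, Finset.prod_const, ← map_prod, ← hbdef,
          Finset.card_univ, hndef, Nat.card_eq_fintype_card]
      calc (b : P) • s0 = ((∏ x : X, F (y * x) : Z) : P) • s0 := by rw [← h1]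
        _ = ((∏ x : X, (φ y (F x) * F y) : Z) : P) • s0 := h2
        _ = ((φ y b * (F y) ^ n : Z) : P) • s0 := by rw [h3]
    -- coprimality: n is invertible mod K
    have hcop : Nat.Coprime n K := by
      obtain ⟨k, hk⟩ := IsPGroup.iff_card.mp (hP.to_subgroup Z)
      rw [hKdef, hk]
      exact Nat.Coprime.symm
        (Nat.Coprime.pow_left k ((Fact.out : p.Prime).coprime_iff_not_dvd.mpr hX))
    obtain ⟨m, -, hm⟩ := Nat.exists_mul_mod_eq_one_of_coprime hcop hK
    have hpow : ∀ z : Z, z ^ (n * m) = z := by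
      intro z
      have h1 : orderOf z ∣ K := hKdef ▸ orderOf_dvd_natCard z
      have h2 : n * m ≡ 1 [MOD K] := by
        unfold Nat.ModEq
        rw [hm, Nat.mod_eq_of_lt hK]
      have h3 : n * m ≡ 1 [MOD orderOf z] := h2.of_dvd h1
      calc z ^ (n * m) = z ^ 1 := pow_eq_pow_iff_modEq.mpr h3
        _ = z := pow_one z
    set c : Z := b ^ m with hcdef
    have hc : ∀ y : X, (c : P) • s0 = ((φ y c * F y : Z) : P) • s0 := by
      intro y
      have h1 := hRpow _ _ (hb y) m
      rw [← hcdef] at h1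
      have h2 : (φ y b * (F y) ^ n) ^ m = φ y c * F y := by
        rw [mul_pow, ← pow_mul, ← map_pow, ← hcdef]
        rw [mul_comm n m, mul_comm m n, hpow (F y)]
      rw [h2] at h1
      exact h1
    refine ⟨(c : P) • s0, fun y => ?_⟩
    calc y • ((c : P) • s0) = (y • (c : P)) • (y • s0) := hcompat y _ _
      _ = ((φ y c : Z) : P) • ((F y : P) • s0) := by rw [← hf y]; rfl
      _ = ((φ y c * F y : Z) : P) • s0 := by rw [Subgroup.coe_mul, mul_smul]
      _ = (c : P) • s0 := (hc y).symm


section GlaubermanAux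

private theorem glauberman_aux (n : ℕ) : ∀ (p : ℕ) [Fact p.Prime]
    (P : Type u) (X : Type v) (S : Type w) [Group P] [Group X] [Finite P] [Finite X]
    [Finite S] [Nonempty S] [MulAction P S] [MulAction X S] [MulDistribMulAction X P],
    Nat.card P ≤ n → IsPGroup p P → ¬ p ∣ Nat.card X →
    MulAction.IsPretransitive P S →
    (∀ (x : X) (g : P) (s : S), x • (g • s) = (x • g) • (x • s)) →
    ∃ s : S, ∀ x : X, x • s = s := by
  induction n with
  | zero =>
    intro p _ P X S _ _ _ _ _ _ _ _ _ hn _ _ _ _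
    exact absurd (Nat.card_pos.trans_le hn) (lt_irrefl 0)
  | succ n ih =>
    intro p _ P X S _ _ _ _ _ _ _ _ _ hn hP hX htrans hcompat
    by_cases hle : Nat.card P ≤ n
    · exact ih p P X S hle hP hX htrans hcompat
    have hcard : Nat.card P = n + 1 := le_antisymm hn (not_le.mp hle)
    by_cases h1 : Nat.card P = 1
    · -- trivial group: S is a singleton
      have hsub : Subsingleton P := (Nat.card_eq_one_iff_unique.mp h1).1
      obtain ⟨s⟩ := ‹Nonempty S›
      refine ⟨s, fun x => ?_⟩
      obtain ⟨g, hg⟩ := htrans.exists_smul_eq (x • s) s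
      have hg1 : g = 1 := Subsingleton.elim g 1
      rw [hg1, one_smul] at hg
      exact hg
    -- nontrivial p-group: the center is nontrivial
    have hnt : Nontrivial P :=
      Finite.one_lt_card_iff_nontrivial.mp (lt_of_le_of_ne Nat.card_pos (Ne.symm h1))
    set Z := Subgroup.center P with hZdef
    have hsmulZ : ∀ (x : X) (z : P), z ∈ Z → x • z ∈ Z := by
      intro x z hz
      rw [hZdef, Subgroup.mem_center_iff]
      intro g
      have hg : g = x • (x⁻¹ • g) := (smul_inv_smul x g).symm
      rw [hZdef, Subgroup.mem_center_iff] at hz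
      rw [hg, ← smul_mul', ← smul_mul', hz]
    -- the quotient set of Z-orbits
    let S' : Type w := Quotient (MulAction.orbitRel Z S)
    have hresp : ∀ (g g' : P), (QuotientGroup.leftRel Z) g g' →
        ∀ (s s' : S), (MulAction.orbitRel Z S) s s' →
        (MulAction.orbitRel Z S) (g • s) (g' • s') := by
      intro g g' hgg' s s' hss'
      rw [QuotientGroup.leftRel_apply] at hgg'
      rw [MulAction.orbitRel_apply] at hss'
      rw [MulAction.orbitRel_apply]
      obtain ⟨z, hz⟩ := hss'
      have hw : (g⁻¹ * g')⁻¹ ∈ Z := Z.inv_mem hgg'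
      have hc := Subgroup.mem_center_iff.mp hw g
      have hkey : g * g'⁻¹ = (g⁻¹ * g')⁻¹ := by
        calc g * g'⁻¹ = g * ((g⁻¹ * g')⁻¹ * g⁻¹) := by group
          _ = (g * (g⁻¹ * g')⁻¹) * g⁻¹ := by rw [mul_assoc]
          _ = ((g⁻¹ * g')⁻¹ * g) * g⁻¹ := by rw [hc]
          _ = (g⁻¹ * g')⁻¹ := by group
      have hgg2 : g * g'⁻¹ ∈ Z := hkey ▸ hw
      refine ⟨⟨(z : P) * (g * g'⁻¹), Z.mul_mem z.2 hgg2⟩, ?_⟩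
      have hzc := Subgroup.mem_center_iff.mp z.2 g
      show ((z : P) * (g * g'⁻¹)) • (g' • s') = g • s
      rw [← hz]
      show ((z : P) * (g * g'⁻¹)) • (g' • s') = g • ((z : P) • s')
      rw [← mul_smul, ← mul_smul]
      congr 1
      calc (z : P) * (g * g'⁻¹) * g' = (z : P) * g := by group
        _ = g * (z : P) := (hzc).symm
    letI : SMul (P ⧸ Z) S' := ⟨fun q o => Quotient.map₂ (· • ·) hresp q o⟩
    have hq_smul : ∀ (g : P) (s : S),
        (QuotientGroup.mk g : P ⧸ Z) • (Quotient.mk (MulAction.orbitRel Z S) s : S')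
          = Quotient.mk (MulAction.orbitRel Z S) (g • s) := fun _ _ => rfl
    letI : MulAction (P ⧸ Z) S' :=
      { one_smul := by
          intro o
          induction o using Quotient.ind with
          | _ s => show Quotient.mk (MulAction.orbitRel Z S) ((1 : P) • s) = _
                   rw [one_smul]
        mul_smul := by
          intro q q' o
          induction q using Quotient.ind with
          | _ g =>
          induction q' using Quotient.ind with
          | _ g' =>
          induction o using Quotient.ind with
          | _ s =>
          show Quotient.mk (MulAction.orbitRel Z S) ((g * g') • s)
            = Quotient.mk (MulAction.orbitRel Z S) (g • g' • s)
          rw [mul_smul] }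
    -- X acts on S'
    have hrespX : ∀ (x : X) (s s' : S), (MulAction.orbitRel Z S) s s' →
        (MulAction.orbitRel Z S) (x • s) (x • s') := by
      intro x s s' hss'
      rw [MulAction.orbitRel_apply] at hss'
      rw [MulAction.orbitRel_apply]
      obtain ⟨z, hz⟩ := hss'
      refine ⟨⟨x • (z : P), hsmulZ x _ z.2⟩, ?_⟩
      show (x • (z : P)) • (x • s') = x • s
      rw [← hcompat, ← hz]
      rfl
    letI : SMul X S' := ⟨fun x o => Quotient.map (x • ·) (hrespX x) o⟩
    have hx_smul : ∀ (x : X) (s : S),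
        x • (Quotient.mk (MulAction.orbitRel Z S) s : S')
          = Quotient.mk (MulAction.orbitRel Z S) (x • s) := fun _ _ => rfl
    letI : MulAction X S' :=
      { one_smul := by
          intro o
          induction o using Quotient.ind with
          | _ s => show Quotient.mk (MulAction.orbitRel Z S) ((1 : X) • s) = _
                   rw [one_smul]
        mul_smul := by
          intro x x' o
          induction o using Quotient.ind with
          | _ s =>
          show Quotient.mk (MulAction.orbitRel Z S) ((x * x') • s)
            = Quotient.mk (MulAction.orbitRel Z S) (x • x' • s)
          rw [mul_smul] }
    -- X acts on P ⧸ Z by automorphisms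
    have hrespP : ∀ (x : X) (g g' : P), (QuotientGroup.leftRel Z) g g' →
        (QuotientGroup.leftRel Z) (x • g) (x • g') := by
      intro x g g' hgg'
      rw [QuotientGroup.leftRel_apply] at hgg'
      rw [QuotientGroup.leftRel_apply]
      have : (x • g)⁻¹ * (x • g') = x • (g⁻¹ * g') := by
        rw [smul_mul', smul_inv']
      rw [this]
      exact hsmulZ x _ hgg'
    letI : SMul X (P ⧸ Z) := ⟨fun x q => Quotient.map (x • ·) (hrespP x) q⟩
    have hxq_smul : ∀ (x : X) (g : P),
        x • (QuotientGroup.mk g : P ⧸ Z) = QuotientGroup.mk (x • g) := fun _ _ => rfl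
    letI : MulAction X (P ⧸ Z) :=
      { one_smul := by
          intro q
          induction q using Quotient.ind with
          | _ g => show QuotientGroup.mk ((1 : X) • g) = _
                   rw [one_smul]
        mul_smul := by
          intro x x' q
          induction q using Quotient.ind with
          | _ g =>
          show QuotientGroup.mk ((x * x') • g) = QuotientGroup.mk (x • x' • g)
          rw [mul_smul] }
    letI : MulDistribMulAction X (P ⧸ Z) :=
      { smul_mul := by
          intro x q q'
          induction q using Quotient.ind with
          | _ g =>
          induction q' using Quotient.ind with
          | _ g' =>
          show QuotientGroup.mk (x • (g * g')) = QuotientGroup.mk ((x • g) * (x • g'))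
          rw [smul_mul']
        smul_one := by
          intro x
          show QuotientGroup.mk (x • (1 : P)) = QuotientGroup.mk (1 : P)
          rw [smul_one] }
    letI : Finite S' := Quotient.finite _
    letI : Nonempty S' := Nonempty.map (Quotient.mk (MulAction.orbitRel Z S)) ‹Nonempty S›
    letI htrans' : MulAction.IsPretransitive (P ⧸ Z) S' := by
      constructor
      intro o o'
      induction o using Quotient.ind with
      | _ s =>
      induction o' using Quotient.ind with
      | _ s' =>
      obtain ⟨g, hg⟩ := htrans.exists_smul_eq s s'
      exact ⟨QuotientGroup.mk g, by rw [hq_smul, hg]⟩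
    have hcompat' : ∀ (x : X) (q : P ⧸ Z) (o : S'), x • (q • o) = (x • q) • (x • o) := by
      intro x q o
      induction q using Quotient.ind with
      | _ g =>
      induction o using Quotient.ind with
      | _ s =>
      show Quotient.mk (MulAction.orbitRel Z S) (x • (g • s))
        = Quotient.mk (MulAction.orbitRel Z S) ((x • g) • (x • s))
      rw [hcompat]
    have hcardle : Nat.card (P ⧸ Z) ≤ n := by
      have h2 : Nat.card P = Nat.card (P ⧸ Z) * Nat.card Z :=
        Subgroup.card_eq_card_quotient_mul_card_subgroup Z
      have hZnt : Nontrivial Z := hZdef ▸ hP.center_nontrivial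
      have hZ2 : 2 ≤ Nat.card Z := Finite.one_lt_card_iff_nontrivial.mpr hZnt
      have hq1 : 1 ≤ Nat.card (P ⧸ Z) := Nat.card_pos
      have h3 : Nat.card (P ⧸ Z) * 2 ≤ Nat.card (P ⧸ Z) * Nat.card Z :=
        Nat.mul_le_mul_left _ hZ2
      rw [← h2, hcard] at h3
      omega
    obtain ⟨o, ho⟩ := ih p (P ⧸ Z) X S' hcardle (hP.to_quotient Z) hX htrans' hcompat'
    obtain ⟨s0, hs0⟩ := Quotient.exists_rep o
    refine glauberman_abelian hP hX hcompat s0 ?_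
    intro x
    have h5 : (Quotient.mk (MulAction.orbitRel Z S) (x • s0) : S')
        = Quotient.mk (MulAction.orbitRel Z S) s0 := by
      rw [← hx_smul, hs0, ho x]
    have h6 := Quotient.exact h5
    have h7 : x • s0 ∈ MulAction.orbit Z s0 := h6
    obtain ⟨z, hz⟩ := h7
    exact ⟨(z : P), z.2, hz⟩

end GlaubermanAux

/-- Glauberman's lemma: a `p'`-group `X` acting compatibly on a
finite `p`-group `P` (by automorphisms) and on a nonempty set `S` on which `P`
acts transitively has a fixed point on `S`. -/
theorem glauberman_fixed_point (p : ℕ) [Fact p.Prime]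
    (P X S : Type*) [Group P] [Group X] [Finite P] [Finite X] [Finite S]
    [Nonempty S] [MulAction P S] [MulAction X S] [MulDistribMulAction X P]
    (hP : IsPGroup p P) (hX : ¬ p ∣ Nat.card X)
    (htrans : MulAction.IsPretransitive P S)
    (hcompat : ∀ (x : X) (g : P) (s : S), x • (g • s) = (x • g) • (x • s)) :
    ∃ s : S, ∀ x : X, x • s = s :=
  glauberman_aux (Nat.card P) p P X S le_rfl hP hX htrans hcompat
end

section
/- Let G be a finite group with a cyclic Sylow p-subgroup P, and suppose |N_G(P) : C_G(P)| = e with m = (|P|−1)/e > 1. If the trivial character 1_G were an exceptional character, then for some nontrivial linear character μ of P and sign ε = ±1 one would have 1 = ε·Σ_{x ∈ N_G(P)/C_G(P)} μ(π^x) for all π ∈ P \ {1}; summing over π ∈ P \ {1} yields εm = −1, a contradiction since m > 1. Hence the trivial character is not exceptional. -/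
/-- Lemma 4: for a finite group with cyclic Sylow `p`-subgroup `P`,
`e = |N_G(P) : C_G(P)|` and `m = (|P| - 1)/e > 1`, the trivial character cannot
be exceptional: assuming `1 = ε·∑_{x ∈ N_G(P)/C_G(P)} μ(π^x)` for all
`π ∈ P \ {1}` (for a nontrivial linear character `μ` of `P` and a sign `ε`)
leads to a contradiction. -/
theorem trivial_character_not_exceptional {G : Type*} [Group G] [Finite G]
    (p : ℕ) [Fact p.Prime] (P : Sylow p G)
    (hcyc : IsCyclic ↥(P : Subgroup G))
    (e m : ℕ)
    (he : e = (Subgroup.centralizer ((P : Subgroup G) : Set G)).relIndex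
      (Subgroup.normalizer ((P : Subgroup G) : Set G)))
    (hm : m * e = Nat.card ↥(P : Subgroup G) - 1) (hm1 : 1 < m)
    (E : Type*) [Group E] [Fintype E]
    [MulDistribMulAction E ↥(P : Subgroup G)]
    (hE : Fintype.card E = e)
    (hfpf : ∀ a : E, a ≠ 1 → ∀ s : ↥(P : Subgroup G), s ≠ 1 → a • s ≠ s)
    (μ : ↥(P : Subgroup G) →* ℂ) (hμ : μ ≠ 1)
    (ε : ℤ) (hε : ε = 1 ∨ ε = -1)
    (hval : ∀ π : ↥(P : Subgroup G), π ≠ 1 → (ε : ℂ) * ∑ a : E, μ (a • π) = 1) :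
    False := by
  classical
  haveI : Fintype ↥(P : Subgroup G) := Fintype.ofFinite _
  set Q := ↥(P : Subgroup G)
  -- each inner sum over π equals ε (since ε² = 1)
  have hε2 : (ε : ℂ) * ε = 1 := by rcases hε with rfl | rfl <;> norm_num
  have hS : ∀ π : Q, π ≠ 1 → ∑ a : E, μ (a • π) = (ε : ℂ) := by
    intro π hπ
    have := hval π hπ
    have : (ε : ℂ) * ((ε : ℂ) * ∑ a : E, μ (a • π)) = ε * 1 := by rw [this]
    rwa [← mul_assoc, hε2, one_mul, mul_one] at this
  -- double sum over all π : total is 0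
  have hcol : ∀ a : E, ∑ π : Q, μ (a • π) = 0 := by
    intro a
    have hbij : Function.Bijective (fun π : Q => a • π) := (MulAction.bijective a)
    rw [Fintype.sum_bijective _ hbij (fun π => μ (a • π)) (fun π => μ π) (fun _ => rfl)]
    exact sum_hom_units_eq_zero μ hμ
  have htot : ∑ π : Q, ∑ a : E, μ (a • π) = 0 := by
    rw [Finset.sum_comm]
    simp [hcol]
  -- split off π = 1
  have hone : ∑ a : E, μ ((a : E) • (1 : Q)) = (e : ℂ) := by
    have : ∀ a : E, μ (a • (1 : Q)) = 1 := by intro a; rw [smul_one, map_one]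
    simp [this, hE]
  have hsplit : ∑ π : Q, ∑ a : E, μ (a • π)
      = (e : ℂ) + ∑ π ∈ Finset.univ.erase (1 : Q), ∑ a : E, μ (a • π) := by
    rw [← Finset.add_sum_erase _ _ (Finset.mem_univ (1 : Q)), hone]
  have hrest : ∑ π ∈ Finset.univ.erase (1 : Q), ∑ a : E, μ (a • π)
      = ((m * e : ℕ) : ℂ) * ε := by
    rw [Finset.sum_congr rfl (fun π hπ => hS π (Finset.ne_of_mem_erase hπ))]
    rw [Finset.sum_const, Finset.card_erase_of_mem (Finset.mem_univ _),
      Finset.card_univ, nsmul_eq_mul]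
    rw [hm, Nat.card_eq_fintype_card]
  have key : (e : ℂ) + ((m * e : ℕ) : ℂ) * ε = 0 := by
    rw [← hrest, ← hsplit, htot]
  -- e > 0
  have he0 : 0 < e := hE ▸ Fintype.card_pos
  have : (e : ℂ) * (1 + (m : ℂ) * ε) = 0 := by push_cast at key ⊢; ring_nf; linear_combination key
  have h2 : (1 : ℂ) + (m : ℂ) * ε = 0 := by
    rcases mul_eq_zero.mp this with h | h
    · exact absurd (Nat.cast_eq_zero.mp h) he0.ne'
    · exact h
  rcases hε with rfl | rfl
  · simp at h2
    have : (m : ℂ) = -1 := by linear_combination h2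
    have : (m : ℤ) = -1 := by exact_mod_cast this
    omega
  · have : (m : ℂ) = 1 := by linear_combination -h2
    have hm' : m = 1 := by exact_mod_cast this
    omega
end

section
/- Let e ≥ 2 and m ≥ 2 be integers. Let X = (X_{kj}) be an e×e integer matrix with X_{11} = 1 and X_{1j} = 0 for 2 ≤ j ≤ e, satisfying for all i, j: Σ_{k=1}^e X_{ki} X_{kj} + m (Σ_{k=1}^e X_{ki})(Σ_{k=1}^e X_{kj}) = m + 1 if i = j, and = m if i ≠ j. Then there is a permutation σ of {2,…,e} such that X_{kj} = δ_{k, σ(j)} for all k, j (with σ(1)=1); i.e., after permuting columns 2,…,e, X is the identity matrix. -/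
lemma aux_unit_col {n : ℕ} (f : Fin n → ℤ) (h : ∑ k, f k * f k = 1) :
    ∃ k, (f k = 1 ∨ f k = -1) ∧ ∀ l, l ≠ k → f l = 0 := by
  have hne : ∃ k, f k ≠ 0 := by
    by_contra hc
    push_neg at hc
    simp [hc] at h
  obtain ⟨k, hk⟩ := hne
  have h1 : f k * f k ≤ 1 := by
    rw [← h]
    exact Finset.single_le_sum (fun l _ => mul_self_nonneg (f l)) (Finset.mem_univ k)
  have h2 : 0 < f k * f k := mul_self_pos.mpr hk
  have h3 : f k * f k = 1 := by omega
  refine ⟨k, mul_self_eq_one_iff.mp h3, ?_⟩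
  have h4 : ∑ l ∈ Finset.univ.erase k, f l * f l = 0 := by
    rw [← Finset.add_sum_erase _ _ (Finset.mem_univ k)] at h
    omega
  intro l hl
  have := (Finset.sum_eq_zero_iff_of_nonneg
      (fun l _ => mul_self_nonneg (f l))).mp h4 l (Finset.mem_erase.mpr ⟨hl, Finset.mem_univ l⟩)
  exact mul_self_eq_zero.mp this

/-- an `e × e` integer matrix whose first row is `(1, 0, …, 0)` and
whose columns satisfy `⟨v_i, v_j⟩ + m·s(v_i)·s(v_j) = m + δ_{ij}` (with `m ≥ 2`)
is, up to a permutation of the columns `2, …, e`, the identity matrix. -/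
theorem decomposition_matrix_identity (e m : ℕ) (he : 2 ≤ e) (hm : 2 ≤ m)
    (X : Matrix (Fin e) (Fin e) ℤ)
    (h11 : X ⟨0, by omega⟩ ⟨0, by omega⟩ = 1)
    (h1j : ∀ j : Fin e, j ≠ ⟨0, by omega⟩ → X ⟨0, by omega⟩ j = 0)
    (horth : ∀ i j : Fin e,
      (∑ k, X k i * X k j) + (m : ℤ) * (∑ k, X k i) * (∑ k, X k j) =
        if i = j then (m : ℤ) + 1 else (m : ℤ)) :
    ∃ σ : Equiv.Perm (Fin e), σ ⟨0, by omega⟩ = ⟨0, by omega⟩ ∧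
      ∀ k j : Fin e, X k j = if k = σ j then 1 else 0 := by
  have he0 : 0 < e := by omega
  have hm' : (2:ℤ) ≤ (m:ℤ) := by exact_mod_cast hm
  set z : Fin e := ⟨0, he0⟩ with hzdef
  set S : Fin e → ℤ := fun j => ∑ k, X k j with hSdef
  have hS : ∀ j, S j = ∑ k, X k j := fun _ => rfl
  simp only [← hS] at horth
  have hnn : ∀ j, 0 ≤ ∑ k, X k j * X k j :=
    fun j => Finset.sum_nonneg fun l _ => mul_self_nonneg _
  have hdiag : ∀ j, (∑ k, X k j * X k j) + (m:ℤ) * (S j * S j) = m + 1 := by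
    intro j
    have h := horth j j
    rw [if_pos rfl, mul_assoc] at h
    exact h
  have hS3 : ∀ j, S j = 1 ∨ S j = -1 ∨ S j = 0 := by
    intro j
    by_contra hc
    push_neg at hc
    have h2 : 2 ≤ S j ∨ S j ≤ -2 := by omega
    have h4 : (4:ℤ) ≤ S j * S j := by rcases h2 with h2 | h2 <;> nlinarith
    have h5 : (m:ℤ) * 4 ≤ (m:ℤ) * (S j * S j) :=
      mul_le_mul_of_nonneg_left h4 (by linarith)
    have := hdiag j
    have := hnn j
    linarith
  by_cases hall : ∀ j, S j = 0
  · exfalso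
    have hdet0 : X.det = 0 := by
      rw [← Matrix.exists_vecMul_eq_zero_iff]
      refine ⟨fun _ => 1, ?_, ?_⟩
      · intro hc
        have := congrFun hc z
        simp at this
      · funext j
        have := hall j
        rw [hS] at this
        simp [Matrix.vecMul, dotProduct]
        exact this
    have hXtX : X.transpose * X =
        1 + Matrix.replicateCol Unit (fun _ : Fin e => (m:ℤ)) * Matrix.replicateRow Unit (fun _ => (1:ℤ)) := by
      ext i j
      have h := horth i j
      rw [hall i, hall j] at h
      simp only [mul_zero, zero_mul, add_zero] at h
      simp only [Matrix.add_apply, Matrix.mul_apply, Matrix.transpose_apply,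
        Matrix.one_apply, Matrix.replicateCol_apply, Matrix.replicateRow_apply]
      rw [h]
      simp
      split_ifs <;> ring
    have hd := Matrix.det_one_add_replicateCol_mul_replicateRow (ι := Unit)
      (fun _ : Fin e => (m:ℤ)) (fun _ => (1:ℤ))
    rw [← hXtX, Matrix.det_mul, Matrix.det_transpose, hdet0, mul_zero] at hd
    have hdp : dotProduct (fun _ => (1:ℤ)) (fun _ : Fin e => (m:ℤ)) = (e:ℤ) * m := by
      simp [dotProduct, Finset.card_univ, mul_comm]
    rw [hdp] at hd
    have : (0:ℤ) ≤ (e:ℤ) * m := by positivity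
    linarith
  push_neg at hall
  obtain ⟨j0, hj0⟩ := hall
  have hunit : ∀ j, S j ≠ 0 → ∑ k, X k j * X k j = 1 := by
    intro j hj
    have h := hdiag j
    have hsq : S j * S j = 1 := by
      rcases hS3 j with h1 | h1 | h1
      · rw [h1]; ring
      · rw [h1]; ring
      · exact absurd h1 hj
    rw [hsq] at h
    linarith
  have hallS : ∀ j, S j ≠ 0 := by
    intro j hj
    have hne : j0 ≠ j := by rintro rfl; exact hj0 hj
    obtain ⟨k0, hk0sgn, hk0z⟩ := aux_unit_col _ (hunit j0 hj0)
    have h := horth j0 j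
    rw [if_neg hne, hj, mul_zero, add_zero] at h
    have hdot : ∑ l, X l j0 * X l j = X k0 j0 * X k0 j := by
      refine Finset.sum_eq_single k0 (fun l _ hl => by rw [hk0z l hl, zero_mul]) ?_
      intro hnotmem
      exact absurd (Finset.mem_univ k0) hnotmem
    rw [hdot] at h
    have hsq : X k0 j * X k0 j = (m:ℤ) * m := by
      rcases hk0sgn with h1 | h1 <;> rw [h1] at h <;> nlinarith
    have hb : X k0 j * X k0 j ≤ ∑ l, X l j * X l j :=
      Finset.single_le_sum (fun l _ => mul_self_nonneg (X l j)) (Finset.mem_univ k0)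
    have hd := hdiag j
    rw [hj] at hd
    nlinarith
  have hsigns : ∀ j, S j = 1 ∨ S j = -1 := by
    intro j
    rcases hS3 j with h | h | h
    · exact Or.inl h
    · exact Or.inr h
    · exact absurd h (hallS j)
  have hcol : ∀ j, ∃ kk, (X kk j = 1 ∨ X kk j = -1) ∧ ∀ l, l ≠ kk → X l j = 0 :=
    fun j => aux_unit_col _ (hunit j (hallS j))
  choose K hK1 hK2 using hcol
  have hSK : ∀ j, S j = X (K j) j := by
    intro j
    rw [hS]
    refine Finset.sum_eq_single (K j) (fun l _ hl => hK2 j l hl) ?_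
    intro hnotmem
    exact absurd (Finset.mem_univ (K j)) hnotmem
  have hpair : ∀ i j, i ≠ j → S i = S j ∧ K i ≠ K j := by
    intro i j hij
    have h := horth i j
    rw [if_neg hij, mul_assoc] at h
    have hdot : ∑ l, X l i * X l j = X (K i) i * X (K i) j := by
      refine Finset.sum_eq_single (K i) (fun l _ hl => by rw [hK2 i l hl, zero_mul]) ?_
      intro hnotmem
      exact absurd (Finset.mem_univ (K i)) hnotmem
    have hXij : X (K i) j = if K i = K j then X (K j) j else 0 := by
      split_ifs with hh
      · rw [hh]
      · exact hK2 j _ hh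
    rw [hdot, hXij, ← hSK i, ← hSK j] at h
    have hswap : S i * (if K i = K j then S j else 0) =
        (if K i = K j then S i * S j else 0) := by
      split_ifs <;> ring
    rw [hswap] at h
    have ht : S i * S j = 1 ∨ S i * S j = -1 := by
      rcases hsigns i with hi | hi <;> rcases hsigns j with hj | hj <;>
        rw [hi, hj] <;> norm_num
    rcases ht with ht | ht
    · rw [ht] at h
      constructor
      · rcases hsigns i with hi | hi <;> rcases hsigns j with hj | hj <;>
          rw [hi, hj] at ht ⊢ <;> norm_num at ht
      · intro hKK
        rw [if_pos hKK] at h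
        omega
    · exfalso
      rw [ht] at h
      split_ifs at h <;> omega
  have hKinj : Function.Injective K := by
    intro i j hij
    by_contra hc
    exact (hpair i j hc).2 hij
  have hKz : K z = z := by
    by_contra hc
    have h0 := hK2 z z (Ne.symm hc)
    rw [h11] at h0
    exact one_ne_zero h0
  have hSz : S z = 1 := by rw [hSK, hKz]; exact h11
  have hSall : ∀ j, S j = 1 := by
    intro j
    by_cases hjz : j = z
    · rw [hjz]; exact hSz
    · rw [← (hpair z j (fun h => hjz h.symm)).1]; exact hSz
  refine ⟨Equiv.ofBijective K ((Finite.injective_iff_bijective).mp hKinj), hKz, ?_⟩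
  intro k j
  simp only [Equiv.ofBijective_apply]
  split_ifs with hk
  · rw [hk, ← hSK j]; exact hSall j
  · exact hK2 j k hk
end

section
/- Let G be a finite group, p a prime, P ∈ Syl_p(G), and suppose P̃ = P ∩ O^p(G) is cyclic with the property N_G(P̃) = C_G(P̃) N_G(P). Let K̃ = O_{p'}(C_G(P̃)), T a p-complement of N_G(P), K = O_{p'}(C_G(P)) = T ∩ C_G(P). Then T̃ := K̃T is a p-complement of N_{O^p(G)}(P̃) and T̃/K̃ ≅ T/K. -/
open scoped Pointwise
open Subgroup

section Aux
variable {G : Type*} [Group G] {p : ℕ} [hp : Fact p.Prime]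

set_option linter.unusedSectionVars false

/-- The subgroup generated by p'-elements is normal. -/
lemma aux_Op_normal (p : ℕ) :
    (Subgroup.closure {g : G | ¬ p ∣ orderOf g}).Normal := by
  constructor
  intro n hn g
  have h1 : (Subgroup.closure {g : G | ¬ p ∣ orderOf g}).map
      (MulAut.conj g).toMonoidHom ≤ Subgroup.closure {g : G | ¬ p ∣ orderOf g} := by
    rw [MonoidHom.map_closure]
    apply Subgroup.closure_mono
    rintro x ⟨y, hy, rfl⟩
    have hsc : SemiconjBy g y (g * y * g⁻¹) := by
      unfold SemiconjBy; group
    simpa [MulAut.conj, hsc.orderOf_eq] using hy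
  exact h1 ⟨n, hn, rfl⟩

lemma aux_le_Op_of_coprime [Finite G] {H : Subgroup G} (h : Nat.Coprime (Nat.card H) p) :
    H ≤ Subgroup.closure {g : G | ¬ p ∣ orderOf g} := by
  intro x hx
  apply Subgroup.subset_closure
  intro hdvd
  have h2 : orderOf x ∣ Nat.card H := Subgroup.orderOf_dvd_natCard _ hx
  exact (Nat.Prime.coprime_iff_not_dvd hp.out).mp h.symm (hdvd.trans h2)

lemma aux_pow_mem_Op [Finite G] (g : G) :
    ∃ k : ℕ, g ^ p ^ k ∈ Subgroup.closure {g : G | ¬ p ∣ orderOf g} := by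
  refine ⟨(orderOf g).factorization p, ?_⟩
  apply Subgroup.subset_closure
  have hg : orderOf g ≠ 0 := (orderOf_pos g).ne'
  have h1 : orderOf (g ^ p ^ (orderOf g).factorization p) =
      ordCompl[p] (orderOf g) := by
    rw [orderOf_pow_of_dvd (pow_ne_zero _ hp.out.pos.ne') (Nat.ordProj_dvd _ p)]
  rw [Set.mem_setOf_eq, h1]
  exact Nat.not_dvd_ordCompl hp.out hg

/-- a centralizing element conjugates trivially -/
lemma aux_cent_conj {H : Subgroup G} {c : G}
    (hc : c ∈ Subgroup.centralizer (H : Set G)) {y : G} (hy : y ∈ H) :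
    c * y * c⁻¹ = y := by
  have h1 := Subgroup.mem_centralizer_iff.mp hc y hy
  rw [← h1]; group

lemma aux_cent_le_norm (H : Subgroup G) :
    Subgroup.centralizer (H : Set G) ≤ (Subgroup.normalizer (H : Set G)) := by
  intro c hc
  rw [Subgroup.mem_normalizer_iff]
  intro x
  refine ⟨fun hx => by rw [aux_cent_conj hc hx]; exact hx, fun hx => ?_⟩
  have h2 := aux_cent_conj (inv_mem hc) hx
  have h3 : c⁻¹ * (c * x * c⁻¹) * c⁻¹⁻¹ = x := by group
  rw [h3] at h2
  rw [h2]; exact hx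

lemma aux_norm_le_norm_cent (H : Subgroup G) :
    (Subgroup.normalizer (H : Set G)) ≤ (Subgroup.normalizer ((Subgroup.centralizer (H : Set G) : Subgroup G) : Set G)) := by
  intro g hg
  have key : ∀ u ∈ (Subgroup.normalizer (H : Set G)), ∀ h ∈ Subgroup.centralizer (H : Set G),
      u * h * u⁻¹ ∈ Subgroup.centralizer (H : Set G) := by
    intro u hu h hh
    rw [Subgroup.mem_centralizer_iff]
    intro y hy
    have hy' : u⁻¹ * y * u ∈ H := (Subgroup.mem_normalizer_iff''.mp hu y).mp hy
    have h2 := Subgroup.mem_centralizer_iff.mp hh _ hy'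
    calc y * (u * h * u⁻¹) = u * ((u⁻¹ * y * u) * h) * u⁻¹ := by group
      _ = u * (h * (u⁻¹ * y * u)) * u⁻¹ := by rw [h2]
      _ = (u * h * u⁻¹) * y := by group
  rw [Subgroup.mem_normalizer_iff]
  intro h
  refine ⟨fun hh => key g hg h hh, fun hh => ?_⟩
  have h2 := key g⁻¹ (inv_mem hg) _ hh
  have h3 : g⁻¹ * (g * h * g⁻¹) * g⁻¹⁻¹ = h := by group
  rwa [h3] at h2

end Aux

/-- with `P̃ = P ⊓ O^p(G)` cyclic, `N_G(P̃) = C_G(P̃)·N_G(P)`,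
`K̃ = O_{p'}(C_G(P̃))`, `T` a `p`-complement of `N_G(P)` and
`K = O_{p'}(C_G(P)) = T ⊓ C_G(P)`: the subgroup `T̃ = K̃T` is a `p`-complement
of `N_{O^p(G)}(P̃)` and `T̃/K̃ ≅ T/K`. -/
theorem p_complement_quotient_iso {G : Type*} [Group G] [Finite G] (p : ℕ)
    [Fact p.Prime] (P : Sylow p G)
    (Op Pt : Subgroup G)
    (hOp : Op = Subgroup.closure {g : G | ¬ p ∣ orderOf g})
    (hPt : Pt = (P : Subgroup G) ⊓ Op)
    (hcyc : IsCyclic ↥Pt)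
    (hprod : (Subgroup.normalizer (Pt : Set G) : Set G) =
      (Subgroup.centralizer (Pt : Set G) : Set G) * (Subgroup.normalizer ((P : Subgroup G) : Set G) : Set G))
    (Kt : Subgroup G)
    (hKtle : Kt ≤ Subgroup.centralizer (Pt : Set G))
    (hKtcop : Nat.Coprime (Nat.card Kt) p)
    (hKtnorm : (Kt.subgroupOf (Subgroup.centralizer (Pt : Set G))).Normal)
    (hKtmax : ∀ L ≤ Subgroup.centralizer (Pt : Set G), Nat.Coprime (Nat.card L) p →
      (L.subgroupOf (Subgroup.centralizer (Pt : Set G))).Normal → L ≤ Kt)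
    (T : Subgroup G) (hTN : T ≤ Subgroup.normalizer ((P : Subgroup G) : Set G))
    (hTcop : Nat.Coprime (Nat.card T) p)
    (hTsup : (P : Subgroup G) ⊔ T = Subgroup.normalizer ((P : Subgroup G) : Set G))
    (K : Subgroup G)
    (hK : K = T ⊓ Subgroup.centralizer ((P : Subgroup G) : Set G))
    (hKcore : K ≤ Subgroup.centralizer ((P : Subgroup G) : Set G) ∧
      Nat.Coprime (Nat.card K) p ∧
      (K.subgroupOf (Subgroup.centralizer ((P : Subgroup G) : Set G))).Normal ∧
      ∀ L ≤ Subgroup.centralizer ((P : Subgroup G) : Set G),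
        Nat.Coprime (Nat.card L) p →
        (L.subgroupOf (Subgroup.centralizer ((P : Subgroup G) : Set G))).Normal → L ≤ K)
    [hn1 : (Kt.subgroupOf (Kt ⊔ T)).Normal] [hn2 : (K.subgroupOf T).Normal] :
    (Kt ⊔ T ≤ Subgroup.normalizer (Pt : Set G) ⊓ Op ∧
      Nat.Coprime (Nat.card ↥(Kt ⊔ T)) p ∧
      ∃ k : ℕ, (Kt ⊔ T).relIndex (Subgroup.normalizer (Pt : Set G) ⊓ Op) = p ^ k) ∧
    Nonempty ((↥(Kt ⊔ T) ⧸ Kt.subgroupOf (Kt ⊔ T)) ≃* (↥T ⧸ K.subgroupOf T)) := by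
  classical
  obtain ⟨hp⟩ := (inferInstance : Fact p.Prime)
  have hOpN : Op.Normal := hOp ▸ aux_Op_normal p
  have hpg : IsPGroup p (P : Subgroup G) := P.isPGroup'
  have hPtP : Pt ≤ (P : Subgroup G) := hPt ▸ inf_le_left
  have hPtOp : Pt ≤ Op := hPt ▸ inf_le_right
  have hPtpg : IsPGroup p Pt := hpg.to_le hPtP
  obtain ⟨e, hePt⟩ := hPtpg.exists_card_eq
  have hTOp : T ≤ Op := hOp ▸ aux_le_Op_of_coprime hTcop
  have hKtOp : Kt ≤ Op := hOp ▸ aux_le_Op_of_coprime hKtcop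
  set C := Subgroup.centralizer (Pt : Set G) with hCdef
  -- element orders in p-groups / p'-groups
  have hordPt : ∀ x ∈ Pt, ∃ k : ℕ, orderOf x ∣ p ^ k := by
    intro x hx
    obtain ⟨k, hk⟩ := hPtpg ⟨x, hx⟩
    refine ⟨k, orderOf_dvd_of_pow_eq_one ?_⟩
    exact congrArg Subtype.val hk
  -- N(P) ≤ N(Pt)
  have hNpNt : (Subgroup.normalizer ((P : Subgroup G) : Set G)) ≤ (Subgroup.normalizer (Pt : Set G)) := by
    have hconj : ∀ g ∈ (Subgroup.normalizer ((P : Subgroup G) : Set G)), ∀ x ∈ Pt, g * x * g⁻¹ ∈ Pt := by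
      intro g hg x hx
      rw [hPt] at hx ⊢
      exact ⟨(Subgroup.mem_normalizer_iff.mp hg x).mp hx.1, hOpN.conj_mem x hx.2 g⟩
    intro g hg
    rw [Subgroup.mem_normalizer_iff]
    intro x
    refine ⟨fun hx => hconj g hg x hx, fun hx => ?_⟩
    have h2 := hconj g⁻¹ (inv_mem hg) _ hx
    have h3 : g⁻¹ * (g * x * g⁻¹) * g⁻¹⁻¹ = x := by group
    rwa [h3] at h2
  have hCNt : C ≤ (Subgroup.normalizer (Pt : Set G)) := aux_cent_le_norm Pt
  have hTNt : T ≤ (Subgroup.normalizer (Pt : Set G)) := hTN.trans hNpNt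
  have hKtNt : Kt ≤ (Subgroup.normalizer (Pt : Set G)) := hKtle.trans hCNt
  -- PART 1
  have hsub : Kt ⊔ T ≤ (Subgroup.normalizer (Pt : Set G)) ⊓ Op :=
    sup_le (le_inf hKtNt hKtOp) (le_inf hTNt hTOp)
  -- Pt is abelian, so Pt ≤ C
  have hPtC : Pt ≤ C := by
    intro x hx
    rw [hCdef, Subgroup.mem_centralizer_iff]
    intro y hy
    obtain ⟨gen, hgen⟩ := hcyc
    obtain ⟨m, hm⟩ := hgen ⟨x, hx⟩
    obtain ⟨n, hn⟩ := hgen ⟨y, hy⟩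
    have hx' : x = (gen : G) ^ m := by
      have := congrArg Subtype.val hm
      simpa using this.symm
    have hy' : y = (gen : G) ^ n := by
      have := congrArg Subtype.val hn
      simpa using this.symm
    rw [hx', hy', ← zpow_add, ← zpow_add, add_comm]
  -- G/Op is a p-group
  have hquotpg : IsPGroup p (G ⧸ Op) := by
    intro x
    obtain ⟨g, rfl⟩ := QuotientGroup.mk_surjective x
    obtain ⟨k, hk⟩ := aux_pow_mem_Op (p := p) g
    refine ⟨k, ?_⟩
    have h1 : ((g ^ p ^ k : G) : G ⧸ Op) = 1 :=
      (QuotientGroup.eq_one_iff _).mpr (hOp ▸ hk)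
    simpa using h1
  obtain ⟨s, hs⟩ := hquotpg.exists_card_eq
  have hOpIdx : Op.index = p ^ s := by rw [Subgroup.index_eq_card]; exact hs
  haveI : Finite (Sylow p G) :=
    Finite.of_injective (fun Q => ((Q : Subgroup G) : Set G))
      (fun Q R h => Sylow.ext (SetLike.coe_injective h))
  have hPidx : ¬ p ∣ (P : Subgroup G).index := Sylow.not_dvd_index P
  have hPcop : Nat.Coprime ((P : Subgroup G).index) p :=
    ((Nat.Prime.coprime_iff_not_dvd hp).mpr hPidx).symm
  -- P ⊔ Op = ⊤
  have hG : (P : Subgroup G) ⊔ Op = ⊤ := by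
    have h1 : ((P : Subgroup G) ⊔ Op).index ∣ p ^ s :=
      hOpIdx ▸ Subgroup.index_dvd_of_le le_sup_right
    have h2 : ((P : Subgroup G) ⊔ Op).index ∣ (P : Subgroup G).index :=
      Subgroup.index_dvd_of_le le_sup_left
    rw [← Subgroup.index_eq_one]
    obtain ⟨j, hj, hj2⟩ := (Nat.dvd_prime_pow hp).mp h1
    cases j with
    | zero => simpa using hj2
    | succ j =>
      exfalso
      exact hPidx ((hj2 ▸ dvd_pow_self p j.succ_ne_zero).trans h2)
  -- Pt.relIndex Op = P.index
  have hOpeq : Op.index = Op.relIndex (P : Subgroup G) := by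
    have := Subgroup.relIndex_sup_right (H := (P : Subgroup G)) (K := Op)
    rw [hG] at this
    rw [← this, Subgroup.relIndex_top_right]
  have hPtrelP : Pt.relIndex (P : Subgroup G) = Op.relIndex (P : Subgroup G) := by
    rw [hPt]; exact Subgroup.inf_relIndex_left (P : Subgroup G) Op
  have hOpIdxpos : 0 < Op.index := Nat.pos_of_ne_zero Subgroup.index_ne_zero_of_finite
  have hrelOp : Pt.relIndex Op = (P : Subgroup G).index := by
    have hkey : Pt.relIndex Op * Op.index = Pt.relIndex (P : Subgroup G) * (P : Subgroup G).index := by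
      rw [Subgroup.relIndex_mul_index hPtOp, Subgroup.relIndex_mul_index hPtP]
    rw [hPtrelP, ← hOpeq, mul_comm (Op.index)] at hkey
    exact Nat.eq_of_mul_eq_mul_right hOpIdxpos hkey
  have hrelcop : ∀ H' : Subgroup G, Pt ≤ H' → H' ≤ Op →
      Nat.Coprime (Pt.relIndex H') p := by
    intro H' h1 h2
    have hd : Pt.relIndex H' ∣ (P : Subgroup G).index := by
      rw [← hrelOp]
      exact ⟨H'.relIndex Op, (Subgroup.relIndex_mul_relIndex Pt H' Op h1 h2).symm⟩
    exact Nat.Coprime.coprime_dvd_left hd hPcop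
  -- the centralizer inside Op : Ct = C ⊓ Op
  set Ct := C ⊓ Op with hCtdef
  have hPtCt : Pt ≤ Ct := le_inf hPtC hPtOp
  haveI hPtCtNorm : (Pt.subgroupOf Ct).Normal := by
    constructor
    intro n hn g
    rw [Subgroup.mem_subgroupOf] at hn ⊢
    have hgC : (g : G) ∈ C := g.2.1
    have hcoe : ((g * n * g⁻¹ : Ct) : G) = (g : G) * (n : G) * (g : G)⁻¹ := rfl
    rw [hcoe, aux_cent_conj hgC hn]
    exact hn
  have hCtrel : Nat.Coprime (Pt.relIndex Ct) p := hrelcop Ct hPtCt inf_le_right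
  have hcardPtCt : Nat.card (Pt.subgroupOf Ct) = p ^ e := by
    rw [← hePt]
    exact Nat.card_congr (Subgroup.subgroupOfEquivOfLe hPtCt).toEquiv
  have hSZcop : Nat.Coprime (Nat.card (Pt.subgroupOf Ct)) (Pt.subgroupOf Ct).index := by
    rw [hcardPtCt]
    exact Nat.Coprime.pow_left e hCtrel.symm
  obtain ⟨Q', hQ'⟩ := Subgroup.exists_right_complement'_of_coprime hSZcop
  set Q : Subgroup G := Q'.map Ct.subtype with hQdef
  have hQle : Q ≤ Ct := Subgroup.map_subtype_le Q'
  have hQcard : Nat.card Q = Pt.relIndex Ct := by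
    have h1 : Nat.card Q = Nat.card Q' :=
      (Nat.card_congr (Subgroup.equivMapOfInjective Q' _ Ct.subtype_injective).toEquiv).symm
    have h2 := hQ'.card_mul
    have h3 := Subgroup.card_mul_index (Pt.subgroupOf Ct)
    rw [h1]
    have h4 : Nat.card (Pt.subgroupOf Ct) * Nat.card Q' =
        Nat.card (Pt.subgroupOf Ct) * (Pt.subgroupOf Ct).index := by rw [h2, h3]
    have hpos : 0 < Nat.card (Pt.subgroupOf Ct) := Nat.card_pos
    exact Nat.eq_of_mul_eq_mul_left hpos h4
  have hQcop : Nat.Coprime (Nat.card Q) p := by rw [hQcard]; exact hCtrel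
  -- decomposition of elements of Ct
  have hCtdec : ∀ x ∈ Ct, ∃ a ∈ Pt, ∃ b ∈ Q, x = a * b := by
    intro x hx
    obtain ⟨⟨a, b⟩, hab, -⟩ := hQ'.existsUnique (⟨x, hx⟩ : Ct)
    refine ⟨((a : Ct) : G), Subgroup.mem_subgroupOf.mp a.2, ((b : Ct) : G),
      Subgroup.mem_map_of_mem _ b.2, ?_⟩
    exact (congrArg Subtype.val hab).symm
  -- p'-elements of Ct lie in Q
  have hp'Q : ∀ x ∈ Ct, ¬ p ∣ orderOf x → x ∈ Q := by
    intro x hx hord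
    obtain ⟨a, ha, b, hb, rfl⟩ := hCtdec x hx
    have hbC : b ∈ C := (hQle hb).1
    have hcomm : Commute a b := Subgroup.mem_centralizer_iff.mp hbC a ha
    have hordb : Nat.Coprime (orderOf b) p :=
      Nat.Coprime.coprime_dvd_left (Subgroup.orderOf_dvd_natCard Q hb) hQcop
    obtain ⟨k, horda⟩ := hordPt a ha
    obtain ⟨j, hj, hj2⟩ := (Nat.dvd_prime_pow hp).mp horda
    have hcop : Nat.Coprime (orderOf a) (orderOf b) := by
      rw [hj2]; exact Nat.Coprime.pow_left j hordb.symm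
    have hmul := hcomm.orderOf_mul_eq_mul_orderOf_of_coprime hcop
    have hj0 : j = 0 := by
      by_contra hj0
      exact hord (hmul ▸ Dvd.dvd.mul_right (hj2 ▸ dvd_pow_self p hj0) _)
    have ha1 : a = 1 := by
      apply orderOf_eq_one_iff.mp
      rw [hj2, hj0, pow_zero]
    rw [ha1, one_mul]
    exact hb
  -- Q ≤ Kt
  have hQKt : Q ≤ Kt := by
    refine hKtmax Q (hQle.trans inf_le_left) hQcop ?_
    constructor
    intro n hn g
    rw [Subgroup.mem_subgroupOf] at hn ⊢
    have hcoe : ((g * n * g⁻¹ : C) : G) = (g : G) * (n : G) * (g : G)⁻¹ := rfl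
    rw [hcoe]
    have hnCt : (n : G) ∈ Ct := hQle hn
    have hgC : (g : G) ∈ C := g.2
    have hy : (g : G) * (n : G) * (g : G)⁻¹ ∈ Ct := by
      have m1 : (g : G) * (n : G) * (g : G)⁻¹ ∈ C := mul_mem (mul_mem hgC hnCt.1) (inv_mem hgC)
      have m2 : (g : G) * (n : G) * (g : G)⁻¹ ∈ Op := hOpN.conj_mem _ hnCt.2 _
      exact ⟨m1, m2⟩
    apply hp'Q _ hy
    have hsc : SemiconjBy (g : G) (n : G) ((g : G) * (n : G) * (g : G)⁻¹) := by
      unfold SemiconjBy; group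
    rw [← hsc.orderOf_eq]
    intro hd
    exact (Nat.Prime.coprime_iff_not_dvd hp).mp hQcop.symm
      (hd.trans (Subgroup.orderOf_dvd_natCard Q hn))
  -- K ≤ Q ≤ Kt
  have hKQ : K ≤ Q := by
    intro x hxK
    have hxK' : x ∈ T ⊓ Subgroup.centralizer ((P : Subgroup G) : Set G) := hK ▸ hxK
    have hxC : x ∈ C := Subgroup.centralizer_le (fun y hy => hPtP hy) hxK'.2
    refine hp'Q x ⟨hxC, hTOp hxK'.1⟩ ?_
    intro hd
    exact (Nat.Prime.coprime_iff_not_dvd hp).mp hKcore.2.1.symm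
      (hd.trans (Subgroup.orderOf_dvd_natCard K hxK))
  have hKKt : K ≤ Kt := hKQ.trans hQKt
  -- stability: elements of T centralizing Pt centralize P
  have hTCK : ∀ x, x ∈ T → x ∈ C → x ∈ Subgroup.centralizer ((P : Subgroup G) : Set G) := by
    intro x hxT hxC
    rw [Subgroup.mem_centralizer_iff]
    intro g hg
    set c := g⁻¹ * (x * g * x⁻¹) with hc
    have hcP : c ∈ (P : Subgroup G) :=
      mul_mem (inv_mem hg) ((Subgroup.mem_normalizer_iff.mp (hTN hxT) g).mp hg)
    have hcOp : c ∈ Op := by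
      have h1 : g⁻¹ * x * g ∈ Op := hOpN.conj_mem' x (hTOp hxT) g
      have h2 : c = (g⁻¹ * x * g) * x⁻¹ := by rw [hc]; group
      rw [h2]
      exact mul_mem h1 (inv_mem (hTOp hxT))
    have hcPt : c ∈ Pt := hPt ▸ ⟨hcP, hcOp⟩
    have hcomm : Commute x c := (Subgroup.mem_centralizer_iff.mp hxC c hcPt).symm
    have hkey : ∀ k : ℕ, x ^ k * g * (x ^ k)⁻¹ = g * c ^ k := by
      intro k
      induction k with
      | zero => simp
      | succ k ih =>
        have hxck : x * c ^ k * x⁻¹ = c ^ k := by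
          rw [(hcomm.pow_right k).eq]; group
        have hgc : x * g * x⁻¹ = g * c := by rw [hc]; group
        calc x ^ (k+1) * g * (x ^ (k+1))⁻¹
            = x * (x ^ k * g * (x ^ k)⁻¹) * x⁻¹ := by group
          _ = x * (g * c ^ k) * x⁻¹ := by rw [ih]
          _ = (x * g * x⁻¹) * (x * c ^ k * x⁻¹) := by group
          _ = (g * c) * c ^ k := by rw [hxck, hgc]
          _ = g * c ^ (k+1) := by rw [pow_succ']; group
    have h2 := hkey (orderOf x)
    rw [pow_orderOf_eq_one x] at h2
    have h3 : c ^ orderOf x = 1 := by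
      have h4 : g * 1 = g * c ^ orderOf x := by
        rw [← h2]; group
      exact (mul_left_cancel h4).symm
    have hcm : orderOf c ∣ orderOf x := orderOf_dvd_of_pow_eq_one h3
    have hxcard : orderOf x ∣ Nat.card T := Subgroup.orderOf_dvd_natCard T hxT
    obtain ⟨k, hck⟩ := hordPt c hcPt
    have hco : Nat.Coprime (p ^ k) (Nat.card T) := Nat.Coprime.pow_left k hTcop.symm
    have hone : orderOf c = 1 :=
      Nat.dvd_one.mp (hco ▸ Nat.dvd_gcd hck (hcm.trans hxcard))
    have hc1 : c = 1 := orderOf_eq_one_iff.mp hone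
    have h5 : g * c = x * g * x⁻¹ := by rw [hc]; group
    rw [hc1, mul_one] at h5
    calc g * x = (x * g * x⁻¹) * x := by rw [← h5]
      _ = x * g := by group
  have hKtT : Kt ⊓ T = K := by
    apply le_antisymm
    · intro x hx
      rw [hK]
      exact ⟨hx.2, hTCK x hx.2 (hKtle hx.1)⟩
    · exact le_inf hKKt (hK ▸ inf_le_left)
  -- the subgroup D = C ⊔ P, with C normal in D, D/C a p-group
  set D := C ⊔ (P : Subgroup G) with hDdef
  have hDNC : D ≤ (Subgroup.normalizer (C : Set G)) := by
    apply sup_le Subgroup.le_normalizer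
    exact (Subgroup.le_normalizer.trans hNpNt).trans (aux_norm_le_norm_cent Pt)
  haveI hC'norm : (C.subgroupOf D).Normal := by
    constructor
    intro n hn g
    rw [Subgroup.mem_subgroupOf] at hn ⊢
    have hg := hDNC g.2
    have hcoe : ((g * n * g⁻¹ : D) : G) = (g : G) * (n : G) * (g : G)⁻¹ := rfl
    rw [hcoe]
    exact (Subgroup.mem_normalizer_iff.mp hg _).mp hn
  have hsupD : C.subgroupOf D ⊔ (P : Subgroup G).subgroupOf D = ⊤ := by
    rw [← Subgroup.subgroupOf_sup (le_sup_left.trans_eq hDdef.symm)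
      (le_sup_right.trans_eq hDdef.symm), ← hDdef, Subgroup.subgroupOf_self]
  have hDquot : IsPGroup p (D ⧸ C.subgroupOf D) := by
    intro x
    obtain ⟨g, rfl⟩ := QuotientGroup.mk_surjective x
    have hg : g ∈ ((C.subgroupOf D ⊔ (P : Subgroup G).subgroupOf D : Subgroup D) : Set D) := by
      rw [hsupD]; trivial
    rw [Subgroup.normal_mul] at hg
    obtain ⟨u, hu, v, hv, huv⟩ := hg
    obtain ⟨k, hk⟩ := hpg ⟨(v : G), Subgroup.mem_subgroupOf.mp hv⟩
    refine ⟨k, ?_⟩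
    have hv0 : ((v : D) : G) ^ p ^ k = 1 := by
      simpa using congrArg Subtype.val hk
    have hv1 : (v : D) ^ p ^ k = 1 := by
      apply Subtype.ext
      simpa using hv0
    have hmk : (QuotientGroup.mk (u * v) : D ⧸ C.subgroupOf D) = QuotientGroup.mk v := by
      rw [QuotientGroup.eq]
      have h6 : (u * v)⁻¹ * v = v⁻¹ * u⁻¹ * v := by group
      rw [h6]
      exact hC'norm.conj_mem' u⁻¹ (inv_mem hu) v
    rw [← huv, hmk, ← QuotientGroup.mk_pow, hv1, QuotientGroup.mk_one]
  -- (C ⊔ P) ⊓ Op ≤ C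
  have hVC : D ⊓ Op ≤ C := by
    have hVD : D ⊓ Op ≤ D := inf_le_left
    have hPtV : Pt ≤ D ⊓ Op := le_inf (hPtC.trans le_sup_left) hPtOp
    obtain ⟨j, hj⟩ := hDquot.exists_card_eq
    have h1 : C.relIndex (D ⊓ Op) ∣ p ^ j := by
      rw [← Subgroup.relIndex_subgroupOf hVD]
      have hdvd := Subgroup.relIndex_dvd_index_of_normal (C.subgroupOf D) ((D ⊓ Op).subgroupOf D)
      have hidx : (C.subgroupOf D).index = p ^ j := by
        rw [Subgroup.index_eq_card, hj]
      rwa [hidx] at hdvd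
    have h2 : Nat.Coprime (C.relIndex (D ⊓ Op)) p := by
      have hdvd : C.relIndex (D ⊓ Op) ∣ Pt.relIndex (D ⊓ Op) := by
        rw [← Subgroup.inf_relIndex_right C (D ⊓ Op)]
        exact Subgroup.relIndex_dvd_of_le_left (D ⊓ Op) (le_inf hPtC hPtV)
      exact Nat.Coprime.coprime_dvd_left hdvd (hrelcop (D ⊓ Op) hPtV inf_le_right)
    have h3 : C.relIndex (D ⊓ Op) = 1 := by
      obtain ⟨i, hi, hieq⟩ := (Nat.dvd_prime_pow hp).mp h1
      cases i with
      | zero => simpa using hieq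
      | succ i =>
        exfalso
        exact (Nat.Prime.coprime_iff_not_dvd hp).mp h2.symm
          (hieq ▸ dvd_pow_self p i.succ_ne_zero)
    exact Subgroup.relIndex_eq_one.mp h3
  -- every element of N(Pt) ⊓ Op lies in Pt ⊔ (Kt ⊔ T)
  have hPtM : Pt ≤ (Subgroup.normalizer (Pt : Set G)) ⊓ Op := le_inf Subgroup.le_normalizer hPtOp
  have hMle : (Subgroup.normalizer (Pt : Set G)) ⊓ Op ≤ Pt ⊔ (Kt ⊔ T) := by
    intro m hm
    have hm1 : m ∈ (C : Set G) * ((Subgroup.normalizer ((P : Subgroup G) : Set G)) : Set G) := by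
      rw [← hprod]
      exact hm.1
    obtain ⟨c, hc, n, hn, hcn⟩ := Set.mem_mul.mp hm1
    have hsupN : (P : Subgroup G).subgroupOf (Subgroup.normalizer ((P : Subgroup G) : Set G)) ⊔
        T.subgroupOf (Subgroup.normalizer ((P : Subgroup G) : Set G)) = ⊤ := by
      rw [← Subgroup.subgroupOf_sup Subgroup.le_normalizer hTN, hTsup,
        Subgroup.subgroupOf_self]
    have hgn : (⟨n, hn⟩ : (Subgroup.normalizer ((P : Subgroup G) : Set G))) ∈
        (((P : Subgroup G).subgroupOf (Subgroup.normalizer ((P : Subgroup G) : Set G)) ⊔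
          T.subgroupOf (Subgroup.normalizer ((P : Subgroup G) : Set G)) : Subgroup _) : Set _) := by
      rw [hsupN]; trivial
    rw [Subgroup.normal_mul] at hgn
    obtain ⟨a', ha', t', ht', hat⟩ := hgn
    have haP : ((a' : (Subgroup.normalizer ((P : Subgroup G) : Set G))) : G) ∈ (P : Subgroup G) :=
      Subgroup.mem_subgroupOf.mp ha'
    have htT : ((t' : (Subgroup.normalizer ((P : Subgroup G) : Set G))) : G) ∈ T :=
      Subgroup.mem_subgroupOf.mp ht'
    have hneq : n = ((a' : (Subgroup.normalizer ((P : Subgroup G) : Set G))) : G) *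
        ((t' : (Subgroup.normalizer ((P : Subgroup G) : Set G))) : G) := by
      have := congrArg Subtype.val hat
      simpa using this.symm
    set a : G := ((a' : (Subgroup.normalizer ((P : Subgroup G) : Set G))) : G) with hadef
    set t : G := ((t' : (Subgroup.normalizer ((P : Subgroup G) : Set G))) : G) with htdef
    set d := c * a with hd
    have htOp : t ∈ Op := hTOp htT
    have hdOp : d ∈ Op := by
      have h7 : d = m * t⁻¹ := by
        rw [hd, ← hcn, hneq]; group
      rw [h7]
      exact mul_mem hm.2 (inv_mem htOp)
    have hcD : c ∈ D := by rw [hDdef]; exact Subgroup.mem_sup_left hc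
    have haD : a ∈ D := by rw [hDdef]; exact Subgroup.mem_sup_right haP
    have hdD : d ∈ D := mul_mem hcD haD
    have hdC : d ∈ C := hVC ⟨hdD, hdOp⟩
    obtain ⟨x, hx, y, hy, hdxy⟩ := hCtdec d ⟨hdC, hdOp⟩
    have hmE : m = x * (y * t) := by
      have h8 : m = d * t := by rw [hd, ← hcn, hneq]; group
      rw [h8, hdxy]; group
    rw [hmE]
    exact mul_mem (Subgroup.mem_sup_left hx)
      (mul_mem (Subgroup.mem_sup_right (Subgroup.mem_sup_left (hQKt hy)))
        (Subgroup.mem_sup_right (Subgroup.mem_sup_right htT)))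
  have hEM : Pt ⊔ (Kt ⊔ T) = (Subgroup.normalizer (Pt : Set G)) ⊓ Op :=
    le_antisymm (sup_le hPtM hsub) hMle
  -- the map T → (Kt ⊔ T) / Kt
  have hsupW : Kt.subgroupOf (Kt ⊔ T) ⊔ T.subgroupOf (Kt ⊔ T) = ⊤ := by
    rw [← Subgroup.subgroupOf_sup le_sup_left le_sup_right, Subgroup.subgroupOf_self]
  set phi : ↥T →* (↥(Kt ⊔ T)) ⧸ (Kt.subgroupOf (Kt ⊔ T)) :=
    (QuotientGroup.mk' _).comp (Subgroup.inclusion le_sup_right) with hphi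
  have hphisurj : Function.Surjective phi := by
    intro q
    obtain ⟨g, rfl⟩ := QuotientGroup.mk'_surjective _ q
    have hg : g ∈ ((Kt.subgroupOf (Kt ⊔ T) ⊔ T.subgroupOf (Kt ⊔ T) :
        Subgroup ↥(Kt ⊔ T)) : Set ↥(Kt ⊔ T)) := by
      rw [hsupW]; trivial
    rw [Subgroup.normal_mul] at hg
    obtain ⟨u, hu, v, hv, huv⟩ := hg
    refine ⟨⟨(v : G), Subgroup.mem_subgroupOf.mp hv⟩, ?_⟩
    have hincl : Subgroup.inclusion (le_sup_right : T ≤ Kt ⊔ T)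
        ⟨(v : G), Subgroup.mem_subgroupOf.mp hv⟩ = v := Subtype.ext rfl
    have h1 : phi ⟨(v : G), Subgroup.mem_subgroupOf.mp hv⟩ =
        QuotientGroup.mk' (Kt.subgroupOf (Kt ⊔ T)) v := by
      rw [hphi, MonoidHom.comp_apply, hincl]
    have hu1 : QuotientGroup.mk' (Kt.subgroupOf (Kt ⊔ T)) u = 1 := by
      rw [QuotientGroup.mk'_apply, QuotientGroup.eq_one_iff]
      exact hu
    rw [h1, ← huv, map_mul, hu1, one_mul]
  have hphiker : phi.ker = K.subgroupOf T := by
    ext u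
    rw [MonoidHom.mem_ker, hphi, MonoidHom.comp_apply, Subgroup.mem_subgroupOf]
    rw [QuotientGroup.mk'_apply, QuotientGroup.eq_one_iff, Subgroup.mem_subgroupOf,
      Subgroup.coe_inclusion]
    constructor
    · intro h
      have : (u : G) ∈ Kt ⊓ T := ⟨h, u.2⟩
      rw [hKtT] at this
      exact this
    · intro h
      have : (u : G) ∈ K := h
      rw [← hKtT] at this
      exact this.1
  -- cardinality of Kt ⊔ T is coprime to p
  have hWeq : Nat.card ↥(Kt ⊔ T) =
      Nat.card Kt * Nat.card ((↥(Kt ⊔ T)) ⧸ Kt.subgroupOf (Kt ⊔ T)) := by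
    rw [← Subgroup.card_mul_index (Kt.subgroupOf (Kt ⊔ T)), Subgroup.index_eq_card,
      Nat.card_congr (Subgroup.subgroupOfEquivOfLe le_sup_left).toEquiv]
  have hQdvd : Nat.card ((↥(Kt ⊔ T)) ⧸ Kt.subgroupOf (Kt ⊔ T)) ∣ Nat.card T :=
    Subgroup.card_dvd_of_surjective phi hphisurj
  have hWcop : Nat.Coprime (Nat.card ↥(Kt ⊔ T)) p := by
    rw [hWeq]
    exact Nat.Coprime.mul hKtcop (Nat.Coprime.coprime_dvd_left hQdvd hTcop)
  -- the relative index
  haveI hAnorm : (Pt.subgroupOf ((Subgroup.normalizer (Pt : Set G)) ⊓ Op)).Normal := by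
    constructor
    intro x hx g
    rw [Subgroup.mem_subgroupOf] at hx ⊢
    have hgN : (g : G) ∈ (Subgroup.normalizer (Pt : Set G)) := g.2.1
    have hcoe : ((g * x * g⁻¹ : ↥((Subgroup.normalizer (Pt : Set G)) ⊓ Op)) : G) =
        (g : G) * (x : G) * (g : G)⁻¹ := rfl
    rw [hcoe]
    exact (Subgroup.mem_normalizer_iff.mp hgN _).mp hx
  have hsupM : Pt.subgroupOf ((Subgroup.normalizer (Pt : Set G)) ⊓ Op) ⊔
      (Kt ⊔ T).subgroupOf ((Subgroup.normalizer (Pt : Set G)) ⊓ Op) = ⊤ := by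
    rw [← Subgroup.subgroupOf_sup hPtM hsub, hEM, Subgroup.subgroupOf_self]
  have hdisj : Disjoint (Pt.subgroupOf ((Subgroup.normalizer (Pt : Set G)) ⊓ Op))
      ((Kt ⊔ T).subgroupOf ((Subgroup.normalizer (Pt : Set G)) ⊓ Op)) := by
    rw [Subgroup.disjoint_def]
    intro x hx1 hx2
    rw [Subgroup.mem_subgroupOf] at hx1 hx2
    have h1 : orderOf (x : G) ∣ p ^ e := hePt ▸ Subgroup.orderOf_dvd_natCard Pt hx1
    have h2 : orderOf (x : G) ∣ Nat.card ↥(Kt ⊔ T) :=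
      Subgroup.orderOf_dvd_natCard _ hx2
    have hco : Nat.Coprime (p ^ e) (Nat.card ↥(Kt ⊔ T)) :=
      Nat.Coprime.pow_left e hWcop.symm
    have h3 : orderOf (x : G) = 1 := Nat.dvd_one.mp (hco ▸ Nat.dvd_gcd h1 h2)
    exact Subtype.ext (orderOf_eq_one_iff.mp h3)
  have hcompl : Subgroup.IsComplement' (Pt.subgroupOf ((Subgroup.normalizer (Pt : Set G)) ⊓ Op))
      ((Kt ⊔ T).subgroupOf ((Subgroup.normalizer (Pt : Set G)) ⊓ Op)) := by
    apply Subgroup.isComplement'_of_disjoint_and_mul_eq_univ hdisj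
    rw [← Subgroup.normal_mul, hsupM, Subgroup.coe_top]
  have hrel : (Kt ⊔ T).relIndex ((Subgroup.normalizer (Pt : Set G)) ⊓ Op) = p ^ e := by
    have h1 := hcompl.index_eq_card
    have h2 : Nat.card (Pt.subgroupOf ((Subgroup.normalizer (Pt : Set G)) ⊓ Op)) = p ^ e := by
      rw [← hePt]
      exact Nat.card_congr (Subgroup.subgroupOfEquivOfLe hPtM).toEquiv
    show ((Kt ⊔ T).subgroupOf ((Subgroup.normalizer (Pt : Set G)) ⊓ Op)).index = p ^ e
    rw [h1, h2]
  -- the isomorphism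
  have hiso : Nonempty ((↥(Kt ⊔ T) ⧸ Kt.subgroupOf (Kt ⊔ T)) ≃* (↥T ⧸ K.subgroupOf T)) := by
    have e1 := QuotientGroup.quotientKerEquivOfSurjective phi hphisurj
    have e2 := QuotientGroup.quotientMulEquivOfEq hphiker.symm
    exact ⟨(e2.trans e1).symm⟩
  exact ⟨⟨hsub, hWcop, e, hrel⟩, hiso⟩
end

section
/- Let P be a finite p-group with normal cyclic subgroup P̃ of order p^n, P = ⟨P̃, u⟩ for some u ∈ P, and write u = ũ r with ũ ∈ P̃ and r ∈ C (a fixed complement, assuming P = P̃ ⋊ C). Then [P̃, P] = [P̃, r] is cyclic, and the conjugacy class of r in P is r^P = [P̃, r]·r. -/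
open scoped commutatorElement

set_option maxHeartbeats 1000000 in
/-- with `P̃ ⊴ P` cyclic of order `p^n`, `P = P̃ ⋊ C`,
`P = ⟨P̃, u⟩`, `u = ũ·r` with `ũ ∈ P̃`, `r ∈ C`: the commutator subgroup
`[P̃, P]` equals the set `{⁅s, r⁆ : s ∈ P̃}` (in particular it is cyclic), and
the conjugacy class of `r` in `P` is `[P̃, r]·r`. -/
theorem commutator_and_class_of_r (p n : ℕ) (hp : p.Prime)
    {P : Type*} [Group P] [Finite P] (hpg : IsPGroup p P)
    (Pt : Subgroup P) (hN : Pt.Normal) (hcyc : IsCyclic ↥Pt)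
    (hcard : Nat.card ↥Pt = p ^ n)
    (C : Subgroup P) (hcomp : Subgroup.IsComplement' Pt C)
    (r ut u : P) (hr : r ∈ C) (hut : ut ∈ Pt) (hu : u = ut * r)
    (hgen : Pt ⊔ Subgroup.closure {u} = ⊤) :
    ((⁅Pt, (⊤ : Subgroup P)⁆ : Subgroup P) : Set P) =
        {x : P | ∃ s ∈ Pt, x = ⁅s, r⁆} ∧
      IsCyclic ↥(⁅Pt, (⊤ : Subgroup P)⁆ : Subgroup P) ∧
      {x : P | ∃ g : P, g * r * g⁻¹ = x} = {x : P | ∃ s ∈ Pt, x = ⁅s, r⁆ * r} := by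
  classical
  haveI := hN
  haveI := hcyc
  -- commutativity inside Pt
  have hcomm : ∀ a ∈ Pt, ∀ b ∈ Pt, a * b = b * a := by
    obtain ⟨g, hg⟩ := hcyc
    intro a ha b hb
    obtain ⟨m, hm⟩ := hg ⟨a, ha⟩
    obtain ⟨k, hk⟩ := hg ⟨b, hb⟩
    have ha' : a = (g : P) ^ m := by
      simpa using congrArg Subtype.val hm.symm
    have hb' : b = (g : P) ^ k := by
      simpa using congrArg Subtype.val hk.symm
    rw [ha', hb', ← zpow_add, ← zpow_add, add_comm]
  -- commutators with elements of Pt lie in Pt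
  have hmemPt : ∀ s ∈ Pt, ∀ g : P, ⁅s, g⁆ ∈ Pt := by
    intro s hs g
    have h1 : ⁅s, g⁆ = s * (g * s⁻¹ * g⁻¹) := by group
    rw [h1]
    exact mul_mem hs (hN.conj_mem s⁻¹ (inv_mem hs) g)
  -- the candidate subgroup K
  let K : Subgroup P :=
    { carrier := {x : P | ∃ s ∈ Pt, x = ⁅s, r⁆}
      one_mem' := ⟨1, Pt.one_mem, by group⟩
      mul_mem' := by
        rintro x y ⟨s, hs, rfl⟩ ⟨t, ht, rfl⟩
        refine ⟨s * t, mul_mem hs ht, ?_⟩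
        have h1 : (r * s⁻¹ * r⁻¹) * t = t * (r * s⁻¹ * r⁻¹) :=
          hcomm _ (hN.conj_mem s⁻¹ (inv_mem hs) r) _ ht
        have h2 : s⁻¹ * t⁻¹ = t⁻¹ * s⁻¹ := hcomm _ (inv_mem hs) _ (inv_mem ht)
        calc ⁅s, r⁆ * ⁅t, r⁆ = s * ((r * s⁻¹ * r⁻¹) * t) * r * t⁻¹ * r⁻¹ := by group
          _ = s * (t * (r * s⁻¹ * r⁻¹)) * r * t⁻¹ * r⁻¹ := by rw [h1]
          _ = (s * t) * r * (s⁻¹ * t⁻¹) * r⁻¹ := by group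
          _ = (s * t) * r * (t⁻¹ * s⁻¹) * r⁻¹ := by rw [h2]
          _ = ⁅s * t, r⁆ := by group
      inv_mem' := by
        rintro x ⟨s, hs, rfl⟩
        refine ⟨s⁻¹, inv_mem hs, ?_⟩
        have h1 : (r * s * r⁻¹) * s⁻¹ = s⁻¹ * (r * s * r⁻¹) :=
          hcomm _ (hN.conj_mem s hs r) _ (inv_mem hs)
        calc ⁅s, r⁆⁻¹ = (r * s * r⁻¹) * s⁻¹ := by group
          _ = s⁻¹ * (r * s * r⁻¹) := h1
          _ = ⁅s⁻¹, r⁆ := by group }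
  have hKmem : ∀ x : P, x ∈ K ↔ ∃ s ∈ Pt, x = ⁅s, r⁆ := fun x => Iff.rfl
  -- K is stable under conjugation by r and r⁻¹
  have hKconj : ∀ x ∈ K, r * x * r⁻¹ ∈ K := by
    rintro x ⟨s, hs, rfl⟩
    exact ⟨r * s * r⁻¹, hN.conj_mem s hs r, by group⟩
  have hKconj' : ∀ x ∈ K, r⁻¹ * x * r ∈ K := by
    rintro x ⟨s, hs, rfl⟩
    exact ⟨r⁻¹ * s * r, by simpa using hN.conj_mem s hs r⁻¹, by group⟩
  -- commutators with powers of r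
  have hpow : ∀ k : ℤ, ∀ s ∈ Pt, ⁅s, r ^ k⁆ ∈ K := by
    intro k
    induction k using Int.induction_on with
    | zero => intro s hs; simpa using K.one_mem
    | succ k ih =>
        intro s hs
        have h1 : ⁅s, r ^ ((k : ℤ) + 1)⁆ = ⁅s, r⁆ * (r * ⁅s, r ^ (k : ℤ)⁆ * r⁻¹) := by
          rw [zpow_add_one]
          group
        rw [h1]
        exact K.mul_mem ⟨s, hs, rfl⟩ (hKconj _ (ih s hs))
    | pred k ih =>
        intro s hs
        have hinv : ⁅s, r⁻¹⁆ ∈ K := by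
          have h2 : ⁅s, r⁻¹⁆ = (r⁻¹ * ⁅s, r⁆ * r)⁻¹ := by group
          rw [h2]
          exact K.inv_mem (hKconj' _ ⟨s, hs, rfl⟩)
        have h1 : ⁅s, r ^ (-(k : ℤ) - 1)⁆ = ⁅s, r⁻¹⁆ * (r⁻¹ * ⁅s, r ^ (-(k : ℤ))⁆ * r) := by
          have : r ^ (-(k : ℤ) - 1) = r⁻¹ * r ^ (-(k : ℤ)) := by
            rw [sub_eq_add_neg, add_comm, zpow_add, zpow_neg_one]
          rw [this]
          group
        rw [h1]
        exact K.mul_mem hinv (hKconj' _ (ih s hs))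
  -- Pt together with r generates P
  have htop : Pt ⊔ Subgroup.closure {r} = ⊤ := by
    rw [eq_top_iff, ← hgen]
    refine sup_le le_sup_left ?_
    rw [Subgroup.closure_le]
    rintro x rfl
    rw [SetLike.mem_coe, hu]
    exact mul_mem (Subgroup.mem_sup_left hut)
      (Subgroup.mem_sup_right (Subgroup.subset_closure rfl))
  -- every element decomposes as t * r ^ k
  have hdecomp : ∀ g : P, ∃ t ∈ Pt, ∃ k : ℤ, g = t * r ^ k := by
    intro g
    have hg : g ∈ ((Pt ⊔ Subgroup.closure {r} : Subgroup P) : Set P) := by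
      rw [htop]; trivial
    rw [Subgroup.normal_mul] at hg
    obtain ⟨t, ht, w, hw, rfl⟩ := hg
    obtain ⟨k, rfl⟩ := Subgroup.mem_closure_singleton.mp hw
    exact ⟨t, ht, k, rfl⟩
  -- the commutator subgroup equals K
  have hKeq : (⁅Pt, (⊤ : Subgroup P)⁆ : Subgroup P) = K := by
    apply le_antisymm
    · rw [Subgroup.commutator_le]
      intro s hs g _
      obtain ⟨t, ht, k, rfl⟩ := hdecomp g
      have h5 : ⁅s, t * r ^ k⁆ = t * ⁅s, r ^ k⁆ * t⁻¹ := by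
        have hst : s * t = t * s := hcomm s hs t ht
        calc ⁅s, t * r ^ k⁆ = (s * t) * r ^ k * s⁻¹ * r ^ (-k) * t⁻¹ := by group
          _ = (t * s) * r ^ k * s⁻¹ * r ^ (-k) * t⁻¹ := by rw [hst]
          _ = t * ⁅s, r ^ k⁆ * t⁻¹ := by group
      have h6 : ⁅s, r ^ k⁆ ∈ K := hpow k s hs
      have h7 : ⁅s, r ^ k⁆ ∈ Pt := hmemPt s hs _
      have h8 : t * ⁅s, r ^ k⁆ * t⁻¹ = ⁅s, r ^ k⁆ := by
        rw [hcomm t ht _ h7, mul_assoc, mul_inv_cancel, mul_one]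
      rw [h5, h8]
      exact h6
    · rintro x ⟨s, hs, rfl⟩
      exact Subgroup.commutator_mem_commutator hs (Subgroup.mem_top r)
  have hKle : K ≤ Pt := by
    rintro x ⟨s, hs, rfl⟩
    exact hmemPt s hs r
  refine ⟨by rw [hKeq]; rfl, by rw [hKeq]; exact Subgroup.isCyclic_of_le hKle, ?_⟩
  ext x
  constructor
  · rintro ⟨g, rfl⟩
    obtain ⟨t, ht, k, rfl⟩ := hdecomp g
    exact ⟨t, ht, by group⟩
  · rintro ⟨s, hs, rfl⟩
    exact ⟨s, by group⟩
end
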